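/- arXiv:2407.13347 — 4 statements merged into one kernel-verified Lean document; each statement's English description precedes it below -/
import Mathlib

section
/- For every origin-symmetric convex body Ω ⊂ ℝ^d and every finite set of points p_1,…,p_N in the torus 𝕋^d, one has ∑_{m ∈ Ω ∩ ℤ^d, m ≠ 0} |∑_{j=1}^N exp(2πi m·p_j)|² ≥ 2^{-d}|Ω| N − N². -/
open MeasureTheory Filter Topology
open scoped ENNReal Pointwise


noncomputable def eC (x : ℝ) : ℂ := Complex.exp (2 * Real.pi * Complex.I * x)

lemma eC_mul_conj (x y : ℝ) : eC x * (starRingEnd ℂ) (eC y) = eC (x - y) := by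
  rw [eC, eC, eC, ← Complex.exp_conj, ← Complex.exp_add]
  congr 1
  simp only [map_mul, Complex.conj_I, Complex.conj_ofReal, map_ofNat]
  push_cast
  ring

lemma eC_zero : eC 0 = 1 := by simp [eC]

lemma H1 {ι : Type*} (B : Finset ι) (g : ι → ℝ) :
    (∑ m ∈ B, ∑ m' ∈ B, eC (g m - g m')).re = ‖∑ m ∈ B, eC (g m)‖ ^ 2 := by
  have h1 : ((∑ m ∈ B, eC (g m)) * (starRingEnd ℂ) (∑ m ∈ B, eC (g m)))
      = ∑ m ∈ B, ∑ m' ∈ B, eC (g m - g m') := by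
    rw [map_sum, Finset.sum_mul_sum]
    exact Finset.sum_congr rfl fun m _ => Finset.sum_congr rfl fun m' _ => eC_mul_conj _ _
  rw [← h1, Complex.mul_conj, Complex.ofReal_re, Complex.normSq_eq_norm_sq]

noncomputable def Sf {d N : ℕ} (p : Fin N → Fin d → ℝ) (n : Fin d → ℤ) : ℂ :=
  ∑ j, eC (∑ i, (n i : ℝ) * p j i)

lemma dot_sub {d : ℕ} (m m' : Fin d → ℤ) (x : Fin d → ℝ) :
    (∑ i, (((m - m') i : ℤ) : ℝ) * x i) = (∑ i, (m i : ℝ) * x i) - ∑ i, (m' i : ℝ) * x i := by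
  rw [← Finset.sum_sub_distrib]
  refine Finset.sum_congr rfl fun i _ => ?_
  simp only [Pi.sub_apply]
  push_cast
  ring

lemma sum4_comm {α β γ : Type*} [AddCommMonoid γ] (s : Finset α) (t : Finset β)
    (f : α → α → β → β → γ) :
    ∑ m ∈ s, ∑ m' ∈ s, ∑ j ∈ t, ∑ k ∈ t, f m m' j k
      = ∑ j ∈ t, ∑ k ∈ t, ∑ m ∈ s, ∑ m' ∈ s, f m m' j k := by
  calc ∑ m ∈ s, ∑ m' ∈ s, ∑ j ∈ t, ∑ k ∈ t, f m m' j k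
      = ∑ m ∈ s, ∑ j ∈ t, ∑ m' ∈ s, ∑ k ∈ t, f m m' j k :=
        Finset.sum_congr rfl fun m _ => Finset.sum_comm
    _ = ∑ j ∈ t, ∑ m ∈ s, ∑ m' ∈ s, ∑ k ∈ t, f m m' j k := Finset.sum_comm
    _ = ∑ j ∈ t, ∑ m ∈ s, ∑ k ∈ t, ∑ m' ∈ s, f m m' j k :=
        Finset.sum_congr rfl fun j _ => Finset.sum_congr rfl fun m _ => Finset.sum_comm
    _ = ∑ j ∈ t, ∑ k ∈ t, ∑ m ∈ s, ∑ m' ∈ s, f m m' j k :=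
        Finset.sum_congr rfl fun j _ => Finset.sum_comm

lemma lattice_finite {d : ℕ} {K : Set (Fin d → ℝ)} (hb : Bornology.IsBounded K)
    (t : Fin d → ℝ) : {m : Fin d → ℤ | (fun i => (m i : ℝ) + t i) ∈ K}.Finite := by
  obtain ⟨R, hR⟩ := hb.subset_closedBall 0
  set C : ℝ := R + ‖t‖ with hC
  apply Set.Finite.subset (Set.finite_Icc (fun _ : Fin d => -⌈C⌉) (fun _ => ⌈C⌉))
  intro m hm
  have h1 := hR hm
  rw [Metric.mem_closedBall, dist_zero_right] at h1
  have key : ∀ i, -C ≤ (m i : ℝ) ∧ (m i : ℝ) ≤ C := by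
    intro i
    have h2 : |(m i : ℝ) + t i| ≤ R :=
      le_trans (norm_le_pi_norm (G := fun _ => ℝ) (fun i => (m i : ℝ) + t i) i) h1
    have h3 : |t i| ≤ ‖t‖ := le_trans (norm_le_pi_norm (G := fun _ => ℝ) t i) le_rfl
    have := abs_le.1 h2
    have := abs_le.1 h3
    constructor <;> (simp only [hC]; linarith)
  constructor <;> intro i
  · show -⌈C⌉ ≤ m i
    have : ((-⌈C⌉ : ℤ) : ℝ) ≤ (m i : ℝ) := by
      push_cast
      exact le_trans (neg_le_neg (Int.le_ceil C)) (key i).1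
    exact_mod_cast this
  · show m i ≤ ⌈C⌉
    calc m i = ⌈((m i : ℤ) : ℝ)⌉ := by rw [Int.ceil_intCast]
      _ ≤ ⌈C⌉ := Int.ceil_le_ceil (key i).2

lemma exists_good_shift {d : ℕ} {K : Set (Fin d → ℝ)} (hK : MeasurableSet K)
    (hb : Bornology.IsBounded K) :
    ∃ t : Fin d → ℝ, ∃ A : Finset (Fin d → ℤ),
      (∀ m : Fin d → ℤ, m ∈ A ↔ (fun i => (m i : ℝ) + t i) ∈ K) ∧
      (volume K).toReal ≤ A.card := by
  classical
  obtain ⟨R, hR⟩ := hb.subset_closedBall 0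
  have hKfin : volume K ≠ ⊤ :=
    (lt_of_le_of_lt (measure_mono hR) (measure_closedBall_lt_top)).ne
  set v : ℝ := (volume K).toReal with hv
  set box : Set (Fin d → ℝ) := Set.univ.pi fun _ => Set.Ico (0:ℝ) 1 with hbox
  have hboxmeas : MeasurableSet box := MeasurableSet.univ_pi fun _ => measurableSet_Ico
  have hboxvol : volume box = 1 := by
    rw [hbox, volume_pi_pi]
    simp [Real.volume_Ico]
  set B : (Fin d → ℤ) → Set (Fin d → ℝ) :=
    fun m => (fun x => x - fun i => (m i : ℝ)) ⁻¹' box with hB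
  have hBmem : ∀ m x, x ∈ B m ↔ ∀ i, ⌊x i⌋ = m i := by
    intro m x
    simp only [hB, Set.mem_preimage, hbox, Set.mem_pi, Set.mem_univ, forall_true_left,
      Set.mem_Ico, Pi.sub_apply]
    constructor
    · intro h i
      obtain ⟨h1, h2⟩ := h i
      rw [Int.floor_eq_iff]
      exact ⟨by linarith, by linarith⟩
    · intro h i
      obtain ⟨h1, h2⟩ := Int.floor_eq_iff.1 (h i)
      exact ⟨by linarith, by linarith⟩
  have hBmeas : ∀ m, MeasurableSet (B m) :=
    fun m => hboxmeas.preimage (measurable_id.sub measurable_const)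
  -- decomposition of volume K
  have hdecomp : volume K = ∑' m : Fin d → ℤ, volume (K ∩ B m) := by
    have hcover : K = ⋃ m : Fin d → ℤ, K ∩ B m := by
      ext x
      simp only [Set.mem_iUnion, Set.mem_inter_iff]
      constructor
      · intro hx
        exact ⟨fun i => ⌊x i⌋, hx, (hBmem _ x).2 fun i => rfl⟩
      · rintro ⟨m, hx, -⟩; exact hx
    have h2 : volume (⋃ m : Fin d → ℤ, K ∩ B m) = ∑' m : Fin d → ℤ, volume (K ∩ B m) := by
      refine measure_iUnion ?_ (fun m => hK.inter (hBmeas m))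
      intro m m' hmm'
      refine Set.disjoint_left.2 fun x hx hx' => hmm' ?_
      funext i
      rw [← (hBmem m x).1 hx.2, (hBmem m' x).1 hx'.2]
    rw [← hcover] at h2
    exact h2
  -- each cell volume as an integral over the box
  have hcell : ∀ m : Fin d → ℤ, volume (K ∩ B m) =
      ∫⁻ t in box, K.indicator 1 ((fun i => (m i : ℝ)) + t) := by
    intro m
    set c : Fin d → ℝ := fun i => (m i : ℝ) with hc
    have hpre : MeasurableSet ((fun t => c + t) ⁻¹' K) :=
      hK.preimage (measurable_const_add _)
    have e1 : (fun t => c + t) ⁻¹' (K ∩ B m) = ((fun t => c + t) ⁻¹' K) ∩ box := by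
      ext t
      simp only [Set.mem_preimage, Set.mem_inter_iff, hB, hc, add_sub_cancel_left]
    calc volume (K ∩ B m) = volume ((fun t => c + t) ⁻¹' (K ∩ B m)) :=
          (measure_preimage_add _ _ _).symm
      _ = volume (((fun t => c + t) ⁻¹' K) ∩ box) := by rw [e1]
      _ = (volume.restrict box) ((fun t => c + t) ⁻¹' K) := (Measure.restrict_apply hpre).symm
      _ = ∫⁻ t in ((fun t => c + t) ⁻¹' K), 1 ∂(volume.restrict box) := (setLIntegral_one _).symm
      _ = ∫⁻ t, ((fun t => c + t) ⁻¹' K).indicator 1 t ∂(volume.restrict box) :=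
          (lintegral_indicator hpre 1).symm
      _ = ∫⁻ t in box, K.indicator 1 (c + t) := by
          refine lintegral_congr fun t => ?_
          simp [Set.indicator, Set.mem_preimage]
  -- swap
  have hswap : volume K = ∫⁻ t in box, ∑' m : Fin d → ℤ,
      K.indicator 1 ((fun i => (m i : ℝ)) + t) := by
    rw [hdecomp, tsum_congr hcell]
    exact (lintegral_tsum fun m =>
      (((measurable_indicator_const_iff 1).2 hK).comp (measurable_const_add _)).aemeasurable).symm
  -- pointwise count
  have hcount : ∀ t : Fin d → ℝ, (∑' m : Fin d → ℤ, K.indicator 1 ((fun i => (m i : ℝ)) + t))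
      = ((lattice_finite hb t).toFinset.card : ℝ≥0∞) := by
    intro t
    have hz : ∀ m ∉ (lattice_finite hb t).toFinset,
        K.indicator 1 ((fun i => (m i : ℝ)) + t) = (0 : ℝ≥0∞) := by
      intro m hm
      rw [Set.Finite.mem_toFinset] at hm
      exact Set.indicator_of_notMem hm 1
    rw [tsum_eq_sum hz]
    rw [Finset.sum_congr rfl (fun m hm => ?_), Finset.sum_const, nsmul_eq_mul, mul_one]
    rw [Set.Finite.mem_toFinset] at hm
    exact Set.indicator_of_mem hm 1
  by_cases hv0 : v ≤ 0
  · exact ⟨0, (lattice_finite hb 0).toFinset,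
      fun m => Set.Finite.mem_toFinset _,
      le_trans hv0 (Nat.cast_nonneg _)⟩
  push_neg at hv0
  by_contra hcon
  push_neg at hcon
  have hcard : ∀ t : Fin d → ℝ, ((lattice_finite hb t).toFinset.card : ℝ) < v :=
    fun t => hcon t (lattice_finite hb t).toFinset (fun m => Set.Finite.mem_toFinset _)
  set n0 : ℕ := ⌈v⌉₊ - 1 with hn0
  have hceil : 1 ≤ ⌈v⌉₊ := Nat.one_le_iff_ne_zero.2 (by
    intro h0
    have := Nat.ceil_eq_zero.1 h0
    linarith)
  have hbound : ∀ t : Fin d → ℝ,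
      (∑' m : Fin d → ℤ, K.indicator 1 ((fun i => (m i : ℝ)) + t)) ≤ (n0 : ℝ≥0∞) := by
    intro t
    rw [hcount t]
    have h1 : (lattice_finite hb t).toFinset.card < ⌈v⌉₊ := Nat.lt_ceil.2 (hcard t)
    exact_mod_cast Nat.cast_le.2 (Nat.le_sub_one_of_lt h1)
  have hle : volume K ≤ (n0 : ℝ≥0∞) := by
    rw [hswap]
    calc ∫⁻ t in box, ∑' m : Fin d → ℤ, K.indicator 1 ((fun i => (m i : ℝ)) + t)
        ≤ ∫⁻ _ in box, (n0 : ℝ≥0∞) := lintegral_mono fun t => hbound t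
      _ = (n0 : ℝ≥0∞) * volume box := setLIntegral_const box _
      _ = (n0 : ℝ≥0∞) := by rw [hboxvol, mul_one]
  have hvle : v ≤ (n0 : ℝ) := by
    have := ENNReal.toReal_mono (by simp) hle
    simpa using this
  have : (n0 : ℝ) < v := by
    have h2 : ((⌈v⌉₊ : ℝ)) < v + 1 := Nat.ceil_lt_add_one (le_of_lt hv0)
    have h3 : ((n0 : ℕ) : ℝ) = (⌈v⌉₊ : ℝ) - 1 := by
      rw [hn0, Nat.cast_sub hceil, Nat.cast_one]
    linarith
  linarith

lemma core {d N : ℕ} (p : Fin N → Fin d → ℝ) (A T : Finset (Fin d → ℤ))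
    (hdiff : ∀ m ∈ A, ∀ m' ∈ A, m ≠ m' → (m - m') ∈ T) :
    (N : ℝ) * A.card ^ 2 ≤ A.card * ((N : ℝ) ^ 2 + ∑ n ∈ T, ‖Sf p n‖ ^ 2) := by
  classical
  set r : (Fin d → ℤ) → Fin N → Fin N → ℝ :=
    fun m j k => (∑ i, (m i : ℝ) * p j i) - (∑ i, (m i : ℝ) * p k i) with hr
  have ha : ∀ n : Fin d → ℤ, ‖Sf p n‖ ^ 2 =
      (∑ j : Fin N, ∑ k : Fin N, eC ((∑ i, (n i : ℝ) * p j i) - (∑ i, (n i : ℝ) * p k i))).re :=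
    fun n => (H1 Finset.univ _).symm
  have hQ1 : ∑ m ∈ A, ∑ m' ∈ A, ‖Sf p (m - m')‖ ^ 2
      = ∑ j : Fin N, ∑ k : Fin N, ‖∑ m ∈ A, eC (r m j k)‖ ^ 2 := by
    calc ∑ m ∈ A, ∑ m' ∈ A, ‖Sf p (m - m')‖ ^ 2
        = ∑ m ∈ A, ∑ m' ∈ A, (∑ j : Fin N, ∑ k : Fin N, eC (r m j k - r m' j k)).re := by
          refine Finset.sum_congr rfl fun m _ => Finset.sum_congr rfl fun m' _ => ?_
          rw [ha]
          congr 1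
          refine Finset.sum_congr rfl fun j _ => Finset.sum_congr rfl fun k _ => ?_
          congr 1
          rw [dot_sub, dot_sub]
          simp only [hr]
          ring
      _ = (∑ m ∈ A, ∑ m' ∈ A, ∑ j : Fin N, ∑ k : Fin N, eC (r m j k - r m' j k)).re := by
          rw [Complex.re_sum]
          exact Finset.sum_congr rfl fun m _ => (Complex.re_sum _ _).symm
      _ = (∑ j : Fin N, ∑ k : Fin N, ∑ m ∈ A, ∑ m' ∈ A, eC (r m j k - r m' j k)).re := by
          rw [sum4_comm]
      _ = ∑ j : Fin N, ∑ k : Fin N, (∑ m ∈ A, ∑ m' ∈ A, eC (r m j k - r m' j k)).re := by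
          rw [Complex.re_sum]
          exact Finset.sum_congr rfl fun j _ => Complex.re_sum _ _
      _ = ∑ j : Fin N, ∑ k : Fin N, ‖∑ m ∈ A, eC (r m j k)‖ ^ 2 :=
          Finset.sum_congr rfl fun j _ => Finset.sum_congr rfl fun k _ => H1 A _
  have hlow : (N : ℝ) * A.card ^ 2 ≤ ∑ j : Fin N, ∑ k : Fin N, ‖∑ m ∈ A, eC (r m j k)‖ ^ 2 := by
    have hdiag : ∀ j : Fin N, ‖∑ m ∈ A, eC (r m j j)‖ ^ 2 = (A.card : ℝ) ^ 2 := by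
      intro j
      have h0 : ∀ m, r m j j = 0 := fun m => sub_self _
      simp [h0, eC_zero]
    calc (N : ℝ) * A.card ^ 2 = ∑ _j : Fin N, (A.card : ℝ) ^ 2 := by
          rw [Finset.sum_const, Finset.card_univ, Fintype.card_fin, nsmul_eq_mul]
      _ = ∑ j : Fin N, ‖∑ m ∈ A, eC (r m j j)‖ ^ 2 :=
          Finset.sum_congr rfl fun j _ => (hdiag j).symm
      _ ≤ ∑ j : Fin N, ∑ k : Fin N, ‖∑ m ∈ A, eC (r m j k)‖ ^ 2 :=
          Finset.sum_le_sum fun j _ =>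
            Finset.single_le_sum (f := fun k => ‖∑ m ∈ A, eC (r m j k)‖ ^ 2)
              (fun k _ => by positivity) (Finset.mem_univ j)
  have hS0 : ‖Sf p (0 : Fin d → ℤ)‖ ^ 2 = (N : ℝ) ^ 2 := by
    simp [Sf, eC_zero]
  have hup : ∑ m ∈ A, ∑ m' ∈ A, ‖Sf p (m - m')‖ ^ 2
      ≤ A.card * ((N : ℝ) ^ 2 + ∑ n ∈ T, ‖Sf p n‖ ^ 2) := by
    have key : ∀ m ∈ A, ∑ m' ∈ A, ‖Sf p (m - m')‖ ^ 2
        ≤ (N : ℝ) ^ 2 + ∑ n ∈ T, ‖Sf p n‖ ^ 2 := by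
      intro m hm
      rw [← Finset.add_sum_erase A _ hm, sub_self, hS0]
      refine add_le_add le_rfl ?_
      have himg : ∑ n ∈ (A.erase m).image (fun m' => m - m'), ‖Sf p n‖ ^ 2
          = ∑ m' ∈ A.erase m, ‖Sf p (m - m')‖ ^ 2 :=
        Finset.sum_image fun x _ y _ h => sub_right_injective h
      rw [← himg]
      refine Finset.sum_le_sum_of_subset_of_nonneg ?_ fun n _ _ => by positivity
      intro n hn
      obtain ⟨m', hm', rfl⟩ := Finset.mem_image.1 hn
      obtain ⟨hne, hm'A⟩ := Finset.mem_erase.1 hm'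
      exact hdiff m hm m' hm'A hne.symm
    calc ∑ m ∈ A, ∑ m' ∈ A, ‖Sf p (m - m')‖ ^ 2
        ≤ ∑ _m ∈ A, ((N : ℝ) ^ 2 + ∑ n ∈ T, ‖Sf p n‖ ^ 2) := Finset.sum_le_sum key
      _ = A.card * ((N : ℝ) ^ 2 + ∑ n ∈ T, ‖Sf p n‖ ^ 2) := by
          rw [Finset.sum_const, nsmul_eq_mul]
  exact le_trans (hlow.trans_eq hQ1.symm) hup

/-- **Cassels–Montgomery lemma.** For every origin-symmetric convex body `Ω ⊂ ℝ^d` and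
every finite set of points `p 1, …, p N` in the torus `𝕋^d` (represented by points of `ℝ^d`),
one has `∑_{m ∈ Ω ∩ ℤ^d, m ≠ 0} |∑_j exp(2πi m·p_j)|² ≥ 2^{-d}|Ω| N − N²`. -/
theorem cassels_montgomery (d N : ℕ) (Ω : Set (Fin d → ℝ))
    (hconv : Convex ℝ Ω) (hcomp : IsCompact Ω) (hint : (interior Ω).Nonempty)
    (hsymm : ∀ x ∈ Ω, -x ∈ Ω) (p : Fin N → Fin d → ℝ) :
    ((2 : ℝ) ^ d)⁻¹ * (volume Ω).toReal * N - (N : ℝ) ^ 2 ≤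
      ∑ᶠ (m : Fin d → ℤ) (_ : (fun i => (m i : ℝ)) ∈ Ω ∧ m ≠ 0),
        ‖∑ j : Fin N,
          Complex.exp (2 * Real.pi * Complex.I * ((∑ i, (m i : ℝ) * p j i : ℝ) : ℂ))‖ ^ 2 := by
  classical
  have hΩb : Bornology.IsBounded Ω := hcomp.isBounded
  have hfinP : {m : Fin d → ℤ | (fun i => (m i : ℝ)) ∈ Ω ∧ m ≠ 0}.Finite := by
    refine Set.Finite.subset (lattice_finite hΩb 0) fun m hm => ?_
    have he : (fun i => (m i : ℝ) + (0 : Fin d → ℝ) i) = fun i => (m i : ℝ) := by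
      funext i; simp
    show (fun i => (m i : ℝ) + (0 : Fin d → ℝ) i) ∈ Ω
    rw [he]
    exact hm.1
  set T := hfinP.toFinset with hT
  have hfs : (∑ᶠ (m : Fin d → ℤ) (_ : (fun i => (m i : ℝ)) ∈ Ω ∧ m ≠ 0),
      ‖∑ j : Fin N,
        Complex.exp (2 * Real.pi * Complex.I * ((∑ i, (m i : ℝ) * p j i : ℝ) : ℂ))‖ ^ 2)
      = ∑ n ∈ T, ‖Sf p n‖ ^ 2 := by
    exact finsum_mem_eq_finite_toFinset_sum _ hfinP
  rw [hfs]
  -- the half body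
  set K : Set (Fin d → ℝ) := (2⁻¹ : ℝ) • Ω with hKdef
  have hKcomp : IsCompact K := hcomp.smul _
  have hKm : MeasurableSet K := hKcomp.isClosed.measurableSet
  have hKb : Bornology.IsBounded K := hKcomp.isBounded
  obtain ⟨t, A, hA, hcard⟩ := exists_good_shift hKm hKb
  have hvolK : (volume K).toReal = ((2 : ℝ) ^ d)⁻¹ * (volume Ω).toReal := by
    rw [hKdef, Measure.addHaar_smul, ENNReal.toReal_mul, ENNReal.toReal_ofReal (abs_nonneg _)]
    congr 1
    rw [abs_of_nonneg (by positivity)]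
    simp [inv_pow]
  have hdiff : ∀ m ∈ A, ∀ m' ∈ A, m ≠ m' → (m - m') ∈ T := by
    intro m hm m' hm' hne
    obtain ⟨a, ha, hae⟩ := Set.mem_smul_set.1 ((hA m).1 hm)
    obtain ⟨b, hb, hbe⟩ := Set.mem_smul_set.1 ((hA m').1 hm')
    rw [hT, Set.Finite.mem_toFinset]
    refine ⟨?_, sub_ne_zero.2 hne⟩
    have hx : (fun i => (((m - m') i : ℤ) : ℝ)) = (2⁻¹ : ℝ) • a + (2⁻¹ : ℝ) • (-b) := by
      funext i
      have hai := congrFun hae i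
      have hbi := congrFun hbe i
      simp only [Pi.smul_apply, smul_eq_mul] at hai hbi
      simp only [Pi.add_apply, Pi.smul_apply, Pi.neg_apply, Pi.sub_apply, smul_eq_mul]
      push_cast
      linarith
    rw [hx]
    exact hconv ha (hsymm b hb) (by norm_num) (by norm_num) (by norm_num)
  -- positivity of volume
  have hΩvolpos : 0 < (volume Ω).toReal := by
    refine ENNReal.toReal_pos ?_ hcomp.measure_lt_top.ne
    refine (lt_of_lt_of_le (isOpen_interior.measure_pos volume hint)
      (measure_mono interior_subset)).ne'
  have hvK : 0 < ((2 : ℝ) ^ d)⁻¹ * (volume Ω).toReal := by positivity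
  have hMpos : (0 : ℝ) < A.card := lt_of_lt_of_le hvK (hvolK ▸ hcard)
  have hcore := core p A T hdiff
  have hSig : 0 ≤ ∑ n ∈ T, ‖Sf p n‖ ^ 2 := Finset.sum_nonneg fun n _ => by positivity
  have h3 : (N : ℝ) * A.card ≤ (N : ℝ) ^ 2 + ∑ n ∈ T, ‖Sf p n‖ ^ 2 := by
    refine le_of_mul_le_mul_left ?_ hMpos
    calc (A.card : ℝ) * ((N : ℝ) * A.card) = (N : ℝ) * (A.card : ℝ) ^ 2 := by ring
      _ ≤ A.card * ((N : ℝ) ^ 2 + ∑ n ∈ T, ‖Sf p n‖ ^ 2) := hcore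
  have h5 : ((2 : ℝ) ^ d)⁻¹ * (volume Ω).toReal * N ≤ (N : ℝ) * A.card := by
    calc ((2 : ℝ) ^ d)⁻¹ * (volume Ω).toReal * N ≤ (A.card : ℝ) * N :=
          mul_le_mul_of_nonneg_right (hvolK ▸ hcard) (Nat.cast_nonneg N)
      _ = (N : ℝ) * A.card := mul_comm _ _
  linarith
end

section
/- Let ν be a σ-finite positive Borel measure on [0,∞), γ ≥ 0, and C ≥ 0. If limsup_{a→∞} ν([0,a])/a^γ ≤ C, then limsup_{t→0⁺} t^γ ∫_0^∞ e^{−tx} dν(x) ≤ C Γ(γ+1). -/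
open MeasureTheory Filter Topology Set Real
open scoped ENNReal

-- Step A: pointwise representation of the exponential as a tail integral
lemma aux_expA {t : ℝ} (ht : 0 < t) (x : ℝ) :
    ENNReal.ofReal (Real.exp (-(t * x))) =
      ∫⁻ s in Set.Ioi x, ENNReal.ofReal (t * Real.exp (-(t * s))) := by
  have hint : IntegrableOn (fun s => t * Real.exp (-(t * s))) (Set.Ioi x) := by
    unfold IntegrableOn
    simpa [neg_mul] using (exp_neg_integrableOn_Ioi x ht).const_mul t
  rw [← ofReal_integral_eq_lintegral_ofReal hint
      (Filter.Eventually.of_forall fun s => by positivity)]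
  congr 1
  rw [integral_const_mul]
  have := integral_comp_mul_left_Ioi (fun u => Real.exp (-u)) x ht
  simp only [smul_eq_mul] at this
  rw [this, integral_exp_neg_Ioi]
  field_simp

-- Step B: Fubini
lemma aux_swap (ν : Measure ℝ) [SigmaFinite ν] {t : ℝ} (ht : 0 < t) :
    ∫⁻ x, ENNReal.ofReal (Real.exp (-(t * x))) ∂ν =
      ∫⁻ s, ENNReal.ofReal (t * Real.exp (-(t * s))) * ν (Set.Iio s) := by
  have hc : Measurable fun s : ℝ => ENNReal.ofReal (t * Real.exp (-(t * s))) := by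
    fun_prop
  set F : ℝ × ℝ → ℝ≥0∞ :=
    {q : ℝ × ℝ | q.1 < q.2}.indicator (fun q => ENNReal.ofReal (t * Real.exp (-(t * q.2)))) with hF
  have hFm : Measurable F :=
    Measurable.indicator (hc.comp measurable_snd) (measurableSet_lt measurable_fst measurable_snd)
  have h1 : ∀ x : ℝ, (fun s => F (x, s)) =
      (Set.Ioi x).indicator (fun s => ENNReal.ofReal (t * Real.exp (-(t * s)))) := by
    intro x; funext s
    by_cases hxs : x < s <;> simp [hF, Set.indicator, hxs]
  have h2 : ∀ s : ℝ, (fun x => F (x, s)) =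
      (Set.Iio s).indicator (fun _ => ENNReal.ofReal (t * Real.exp (-(t * s)))) := by
    intro s; funext x
    by_cases hxs : x < s <;> simp [hF, Set.indicator, hxs]
  calc ∫⁻ x, ENNReal.ofReal (Real.exp (-(t * x))) ∂ν
      = ∫⁻ x, (∫⁻ s, F (x, s)) ∂ν := by
        refine lintegral_congr fun x => ?_
        rw [aux_expA ht x, h1 x, lintegral_indicator measurableSet_Ioi]
    _ = ∫⁻ s, ∫⁻ x, F (x, s) ∂ν := by
        exact lintegral_lintegral_swap (f := fun x s => F (x, s)) hFm.aemeasurable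
    _ = ∫⁻ s, ENNReal.ofReal (t * Real.exp (-(t * s))) * ν (Set.Iio s) := by
        refine lintegral_congr fun s => ?_
        rw [h2 s, lintegral_indicator measurableSet_Iio, setLIntegral_const]

-- Step C: the Gamma integral
lemma aux_gamma {t γ : ℝ} (ht : 0 < t) (hγ : 0 ≤ γ) :
    ∫⁻ s in Set.Ioi (0:ℝ), ENNReal.ofReal (s ^ γ * Real.exp (-(t * s))) =
      ENNReal.ofReal ((1 / t) ^ (γ + 1) * Real.Gamma (γ + 1)) := by
  have hint : IntegrableOn (fun s : ℝ => s ^ γ * Real.exp (-(t * s))) (Set.Ioi 0) := by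
    have := integrableOn_rpow_mul_exp_neg_mul_rpow (p := 1) (s := γ) (b := t)
      (by linarith) zero_lt_one ht
    simpa [Real.rpow_one, neg_mul] using this
  rw [← ofReal_integral_eq_lintegral_ofReal hint ?_]
  · congr 1
    have := integral_rpow_mul_exp_neg_mul_Ioi (a := γ + 1) (r := t) (by linarith) ht
    simpa [add_sub_cancel_right] using this
  · filter_upwards [ae_restrict_mem measurableSet_Ioi] with s hs
    have : (0:ℝ) < s := hs
    positivity

/-- One-sided Abelian theorem for Laplace transforms of measures: if `ν` is a σ-finite
positive Borel measure on `[0,∞)`, `γ ≥ 0` and `C ≥ 0` satisfy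
`limsup_{a→∞} ν([0,a])/a^γ ≤ C`, then
`limsup_{t→0⁺} t^γ ∫_0^∞ e^{−tx} dν(x) ≤ C Γ(γ+1)`. -/
theorem one_sided_abelian_tauberian (ν : Measure ℝ) [SigmaFinite ν]
    (hν : ν (Set.Iio 0) = 0) (γ C : ℝ) (hγ : 0 ≤ γ) (hC : 0 ≤ C)
    (h : Filter.limsup (fun a : ℝ => ν (Set.Icc 0 a) / ENNReal.ofReal (a ^ γ)) atTop ≤
      ENNReal.ofReal C) :
    Filter.limsup
        (fun t : ℝ => ENNReal.ofReal (t ^ γ) * ∫⁻ x, ENNReal.ofReal (Real.exp (-t * x)) ∂ν)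
        (𝓝[>] 0) ≤
      ENNReal.ofReal (C * Real.Gamma (γ + 1)) := by
  set Γ1 := Real.Gamma (γ + 1) with hΓ1
  have hΓpos : 0 < Γ1 := Real.Gamma_pos_of_pos (by linarith)
  set Φ : ℝ → ℝ≥0∞ :=
    fun t => ENNReal.ofReal (t ^ γ) * ∫⁻ x, ENNReal.ofReal (Real.exp (-t * x)) ∂ν with hΦ
  have key : ∀ ε : ℝ, 0 < ε → Filter.limsup Φ (𝓝[>] 0) ≤ ENNReal.ofReal ((C + ε) * Γ1) := by
    intro ε hε
    -- obtain the threshold A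
    have hlt : Filter.limsup (fun a : ℝ => ν (Set.Icc 0 a) / ENNReal.ofReal (a ^ γ)) atTop <
        ENNReal.ofReal (C + ε) :=
      lt_of_le_of_lt h (by rw [ENNReal.ofReal_lt_ofReal_iff (by linarith)]; linarith)
    obtain ⟨A₀, hA₀⟩ := (Filter.eventually_atTop).1 (Filter.eventually_lt_of_limsup_lt hlt)
    set A : ℝ := max A₀ 1 with hA
    have hA1 : (1:ℝ) ≤ A := le_max_right _ _
    have hApos : (0:ℝ) < A := lt_of_lt_of_le one_pos hA1
    have hbound : ∀ a : ℝ, A ≤ a → ν (Set.Icc 0 a) ≤ ENNReal.ofReal ((C + ε) * a ^ γ) := by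
      intro a ha
      have ha1 : (1:ℝ) ≤ a := le_trans hA1 ha
      have hrp : (0:ℝ) < a ^ γ := Real.rpow_pos_of_pos (by linarith) γ
      have := (hA₀ a (le_trans (le_max_left _ _) ha)).le
      rw [ENNReal.div_le_iff (by simp [hrp]) (by simp)] at this
      calc ν (Set.Icc 0 a) ≤ ENNReal.ofReal (C + ε) * ENNReal.ofReal (a ^ γ) := this
        _ = ENNReal.ofReal ((C + ε) * a ^ γ) := (ENNReal.ofReal_mul (by linarith)).symm
    set M : ℝ≥0∞ := ν (Set.Icc 0 A) with hM
    have hMfin : M ≠ ⊤ :=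
      ne_top_of_le_ne_top ENNReal.ofReal_ne_top (hbound A le_rfl)
    -- the Iio bound
    have hIio : ∀ s : ℝ, ν (Set.Iio s) ≤ ν (Set.Icc 0 s) := by
      intro s
      have hsub : Set.Iio s ⊆ Set.Iio 0 ∪ Set.Icc 0 s := by
        intro x hx
        rcases lt_or_ge x 0 with h0 | h0
        · exact Or.inl h0
        · exact Or.inr ⟨h0, le_of_lt hx⟩
      calc ν (Set.Iio s) ≤ ν (Set.Iio 0 ∪ Set.Icc 0 s) := measure_mono hsub
        _ ≤ ν (Set.Iio 0) + ν (Set.Icc 0 s) := measure_union_le _ _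
        _ = ν (Set.Icc 0 s) := by rw [hν, zero_add]
    -- pointwise bound for positive t
    have hpt : ∀ t : ℝ, 0 < t →
        Φ t ≤ ENNReal.ofReal (t ^ (γ + 1)) * (M * ENNReal.ofReal A) +
          ENNReal.ofReal ((C + ε) * Γ1) := by
      intro t ht
      have htγ : (0:ℝ) < t ^ γ := Real.rpow_pos_of_pos ht γ
      have hrw : Φ t = ∫⁻ s, ENNReal.ofReal (t ^ γ) *
          (ENNReal.ofReal (t * Real.exp (-(t * s))) * ν (Set.Iio s)) := by
        rw [hΦ]
        simp only [neg_mul]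
        rw [aux_swap ν ht, ← lintegral_const_mul' _ _ ENNReal.ofReal_ne_top]
      rw [hrw]
      set B1 : ℝ → ℝ≥0∞ := (Set.Ioc 0 A).indicator
        (fun _ => ENNReal.ofReal (t ^ γ) * (ENNReal.ofReal t * M)) with hB1
      set B2 : ℝ → ℝ≥0∞ := (Set.Ioi A).indicator
        (fun s => ENNReal.ofReal (t ^ γ) * (ENNReal.ofReal (t * Real.exp (-(t * s))) *
          ENNReal.ofReal ((C + ε) * s ^ γ))) with hB2
      have hle : ∀ s : ℝ, ENNReal.ofReal (t ^ γ) *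
          (ENNReal.ofReal (t * Real.exp (-(t * s))) * ν (Set.Iio s)) ≤ B1 s + B2 s := by
        intro s
        rcases le_or_gt s 0 with hs0 | hs0
        · have : ν (Set.Iio s) = 0 :=
            measure_mono_null (fun x hx => lt_of_lt_of_le hx hs0) hν
          simp [this]
        · have hexple : ENNReal.ofReal (t * Real.exp (-(t * s))) ≤ ENNReal.ofReal t := by
            apply ENNReal.ofReal_le_ofReal
            nlinarith [Real.exp_le_one_iff.2 (by nlinarith : -(t*s) ≤ 0), Real.exp_pos (-(t*s))]
          rcases le_or_gt s A with hsA | hsA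
          · have hmem : s ∈ Set.Ioc 0 A := ⟨hs0, hsA⟩
            have hνle : ν (Set.Iio s) ≤ M :=
              le_trans (hIio s) (measure_mono (Set.Icc_subset_Icc_right hsA))
            have : ENNReal.ofReal (t ^ γ) *
                (ENNReal.ofReal (t * Real.exp (-(t * s))) * ν (Set.Iio s)) ≤ B1 s := by
              rw [hB1, Set.indicator_of_mem hmem]
              exact mul_le_mul_right (mul_le_mul' hexple hνle) _
            exact le_trans this le_self_add
          · have hmem : s ∈ Set.Ioi A := hsA
            have hνle : ν (Set.Iio s) ≤ ENNReal.ofReal ((C + ε) * s ^ γ) :=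
              le_trans (hIio s) (hbound s hsA.le)
            have : ENNReal.ofReal (t ^ γ) *
                (ENNReal.ofReal (t * Real.exp (-(t * s))) * ν (Set.Iio s)) ≤ B2 s := by
              rw [hB2, Set.indicator_of_mem hmem]
              exact mul_le_mul_right (mul_le_mul_right hνle _) _
            exact le_trans this le_add_self
      calc ∫⁻ s, ENNReal.ofReal (t ^ γ) *
              (ENNReal.ofReal (t * Real.exp (-(t * s))) * ν (Set.Iio s))
          ≤ ∫⁻ s, B1 s + B2 s := lintegral_mono hle
        _ = (∫⁻ s, B1 s) + ∫⁻ s, B2 s :=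
            lintegral_add_left (measurable_const.indicator measurableSet_Ioc) _
        _ ≤ ENNReal.ofReal (t ^ (γ + 1)) * (M * ENNReal.ofReal A) +
            ENNReal.ofReal ((C + ε) * Γ1) := by
            gcongr
            · -- B1 integral
              rw [hB1, lintegral_indicator measurableSet_Ioc, setLIntegral_const,
                Real.volume_Ioc]
              have : ENNReal.ofReal (t ^ γ) * ENNReal.ofReal t = ENNReal.ofReal (t ^ (γ+1)) := by
                rw [← ENNReal.ofReal_mul htγ.le, Real.rpow_add_one ht.ne']
              calc ENNReal.ofReal (t ^ γ) * (ENNReal.ofReal t * M) * ENNReal.ofReal (A - 0)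
                  = ENNReal.ofReal (t ^ (γ+1)) * (M * ENNReal.ofReal A) := by
                    rw [sub_zero, ← this]; ring
                _ ≤ _ := le_rfl
            · -- B2 integral
              rw [hB2, lintegral_indicator measurableSet_Ioi]
              have hsub : ∫⁻ s in Set.Ioi A, ENNReal.ofReal (t ^ γ) *
                  (ENNReal.ofReal (t * Real.exp (-(t * s))) * ENNReal.ofReal ((C + ε) * s ^ γ))
                  ≤ ∫⁻ s in Set.Ioi (0:ℝ), ENNReal.ofReal (t ^ γ) *
                  (ENNReal.ofReal (t * Real.exp (-(t * s))) * ENNReal.ofReal ((C + ε) * s ^ γ)) :=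
                lintegral_mono_set (Set.Ioi_subset_Ioi hApos.le)
              refine le_trans hsub (le_of_eq ?_)
              have hcong : ∫⁻ s in Set.Ioi (0:ℝ), ENNReal.ofReal (t ^ γ) *
                  (ENNReal.ofReal (t * Real.exp (-(t * s))) * ENNReal.ofReal ((C + ε) * s ^ γ))
                  = ∫⁻ s in Set.Ioi (0:ℝ), (ENNReal.ofReal (C + ε) * ENNReal.ofReal (t ^ (γ+1)))
                    * ENNReal.ofReal (s ^ γ * Real.exp (-(t * s))) := by
                refine setLIntegral_congr_fun measurableSet_Ioi
                  (fun s hs => ?_)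
                have hs0 : (0:ℝ) < s := hs
                have hsγ : (0:ℝ) ≤ s ^ γ := (Real.rpow_pos_of_pos hs0 γ).le
                rw [← ENNReal.ofReal_mul (by positivity), ← ENNReal.ofReal_mul htγ.le,
                  ← ENNReal.ofReal_mul (by linarith), ← ENNReal.ofReal_mul (by positivity)]
                congr 1
                rw [Real.rpow_add_one ht.ne']
                ring
              rw [hcong, lintegral_const_mul' _ _
                  (ENNReal.mul_ne_top ENNReal.ofReal_ne_top ENNReal.ofReal_ne_top),
                aux_gamma ht hγ, ← ENNReal.ofReal_mul (by linarith),
                ← ENNReal.ofReal_mul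
                  (mul_nonneg (by linarith) (Real.rpow_pos_of_pos ht (γ+1)).le)]
              congr 1
              have h1t : t ^ (γ+1) * (1/t) ^ (γ+1) = 1 := by
                rw [← Real.mul_rpow ht.le (by positivity)]
                rw [mul_one_div_cancel ht.ne', Real.one_rpow]
              linear_combination ((C + ε) * Γ1) * h1t
    -- limsup argument
    have hev : Φ ≤ᶠ[𝓝[>] (0:ℝ)] fun t => ENNReal.ofReal (t ^ (γ + 1)) *
        (M * ENNReal.ofReal A) + ENNReal.ofReal ((C + ε) * Γ1) := by
      filter_upwards [self_mem_nhdsWithin] with t ht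
      exact hpt t ht
    have htend : Filter.Tendsto (fun t : ℝ => ENNReal.ofReal (t ^ (γ + 1)) *
        (M * ENNReal.ofReal A) + ENNReal.ofReal ((C + ε) * Γ1)) (𝓝[>] (0:ℝ))
        (𝓝 (ENNReal.ofReal ((C + ε) * Γ1))) := by
      have hr : Filter.Tendsto (fun t : ℝ => t ^ (γ + 1)) (𝓝[>] (0:ℝ)) (𝓝 0) := by
        have hc := (Real.continuousAt_rpow_const 0 (γ + 1) (Or.inr (by linarith))).tendsto
        rw [Real.zero_rpow (by linarith)] at hc
        exact hc.mono_left nhdsWithin_le_nhds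
      have h0 : Filter.Tendsto (fun t : ℝ => ENNReal.ofReal (t ^ (γ + 1)) *
          (M * ENNReal.ofReal A)) (𝓝[>] (0:ℝ)) (𝓝 0) := by
        have := ENNReal.Tendsto.mul_const (b := M * ENNReal.ofReal A) (ENNReal.tendsto_ofReal hr)
          (Or.inr (ENNReal.mul_ne_top hMfin ENNReal.ofReal_ne_top))
        simpa using this
      simpa using h0.add tendsto_const_nhds
    calc Filter.limsup Φ (𝓝[>] (0:ℝ)) ≤ Filter.limsup _ (𝓝[>] (0:ℝ)) :=
        Filter.limsup_le_limsup hev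
      _ = ENNReal.ofReal ((C + ε) * Γ1) := htend.limsup_eq
  -- ε → 0
  refine ENNReal.le_of_forall_pos_le_add fun δ hδ _ => ?_
  have hεpos : (0:ℝ) < (δ : ℝ) / (Γ1 + 1) := by positivity
  refine le_trans (key _ hεpos) ?_
  have : ((C + (δ : ℝ) / (Γ1 + 1)) * Γ1) = C * Γ1 + ((δ : ℝ) / (Γ1 + 1)) * Γ1 := by ring
  rw [this, ENNReal.ofReal_add (mul_nonneg hC hΓpos.le)
    (mul_nonneg (by positivity) hΓpos.le)]
  gcongr
  have hle : ((δ : ℝ) / (Γ1 + 1)) * Γ1 ≤ (δ : ℝ) := by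
    rw [div_mul_eq_mul_div, div_le_iff₀ (by linarith)]
    nlinarith [NNReal.coe_nonneg δ]
  calc ENNReal.ofReal (((δ : ℝ) / (Γ1 + 1)) * Γ1) ≤ ENNReal.ofReal (δ : ℝ) :=
      ENNReal.ofReal_le_ofReal hle
    _ = (δ : ℝ≥0∞) := ENNReal.ofReal_coe_nnreal
end

section
/- Let ν be a σ-finite positive Borel measure on [0,∞) and γ ≥ 0. Then lim_{t→0⁺} t^γ ∫_0^∞ e^{−tλ} dν(λ) = C if and only if lim_{a→∞} ν([0,a])/a^γ = C/Γ(γ+1). -/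
open MeasureTheory Filter Topology Set
open scoped ENNReal Polynomial

namespace KaramataAux

/-- The Laplace transform of `ν` as a lower integral. -/
noncomputable def L (ν : Measure ℝ) (t : ℝ) : ℝ≥0∞ :=
  ∫⁻ x, ENNReal.ofReal (Real.exp (-t * x)) ∂ν

lemma ae_nonneg (ν : Measure ℝ) (hν : ν (Set.Iio 0) = 0) : ∀ᵐ x ∂ν, 0 ≤ x := by
  rw [ae_iff]
  convert hν using 2
  ext x
  simp [not_le]

lemma L_mono (ν : Measure ℝ) (hν : ν (Set.Iio 0) = 0) {t₁ t₂ : ℝ} (h : t₁ ≤ t₂) :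
    L ν t₂ ≤ L ν t₁ := by
  refine lintegral_mono_ae ((ae_nonneg ν hν).mono fun x hx => ?_)
  exact ENNReal.ofReal_le_ofReal (Real.exp_le_exp.2 (by nlinarith))

lemma Icc_lt_top (ν : Measure ℝ) {t a : ℝ} (ht : 0 < t) (hL : L ν t ≠ ⊤) (_ : 0 ≤ a) :
    ν (Icc 0 a) < ⊤ := by
  have key : ν (Icc 0 a) * ENNReal.ofReal (Real.exp (-t * a)) ≤ L ν t := by
    have h1 : ∫⁻ _ in Icc 0 a, ENNReal.ofReal (Real.exp (-t * a)) ∂ν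
        = ν (Icc 0 a) * ENNReal.ofReal (Real.exp (-t * a)) := by
      rw [setLIntegral_const, mul_comm]
    rw [← h1]
    refine le_trans (setLIntegral_mono (by fun_prop) fun x hx => ?_) (setLIntegral_le_lintegral _ _)
    exact ENNReal.ofReal_le_ofReal (Real.exp_le_exp.2 (by nlinarith [hx.1, hx.2]))
  by_contra hcon
  rw [not_lt, top_le_iff] at hcon
  rw [hcon, ENNReal.top_mul (by simp [Real.exp_pos])] at key
  exact hL (top_le_iff.1 key)

lemma measurable_nuIcc (ν : Measure ℝ) : Measurable fun s : ℝ => ν (Icc 0 s) := by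
  have : Monotone fun s : ℝ => ν (Icc 0 s) := fun a b hab => measure_mono (Icc_subset_Icc_right hab)
  exact this.measurable

/-- The key Fubini identity. -/
lemma key_identity (ν : Measure ℝ) [SigmaFinite ν] (hν : ν (Set.Iio 0) = 0) {t : ℝ}
    (ht : 0 < t) :
    L ν t = ∫⁻ s in Ioi (0:ℝ), ENNReal.ofReal (t * Real.exp (-t * s)) * ν (Icc 0 s) := by
  set T : Set (ℝ × ℝ) := {p : ℝ × ℝ | 0 ≤ p.2 ∧ p.2 ≤ p.1} with hT
  have hmeas : MeasurableSet T := by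
    apply MeasurableSet.inter
    · exact measurableSet_le measurable_const measurable_snd
    · exact measurableSet_le measurable_snd measurable_fst
  have hind : ∀ s x : ℝ, T.indicator (1 : ℝ × ℝ → ℝ≥0∞) (s, x) = (Icc 0 s).indicator 1 x := by
    intro s x
    by_cases hx : x ∈ Icc 0 s
    · rw [indicator_of_mem hx, indicator_of_mem (show (s, x) ∈ T from ⟨hx.1, hx.2⟩)]
      rfl
    · rw [indicator_of_notMem hx, indicator_of_notMem]
      simpa [hT, Set.mem_Icc] using hx
  have step1 : ∀ s : ℝ, ν (Icc 0 s) = ∫⁻ x, T.indicator (1 : ℝ × ℝ → ℝ≥0∞) (s, x) ∂ν := by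
    intro s
    simp_rw [hind s]
    rw [lintegral_indicator_one measurableSet_Icc]
  -- the inner computation
  have inner : ∀ x : ℝ, 0 ≤ x →
      ∫⁻ s in Ioi (0:ℝ), ENNReal.ofReal (t * Real.exp (-t * s)) *
        T.indicator (1 : ℝ × ℝ → ℝ≥0∞) (s, x)
      = ENNReal.ofReal (Real.exp (-t * x)) := by
    intro x hx
    have h1 : ∀ s : ℝ, ENNReal.ofReal (t * Real.exp (-t * s)) *
        T.indicator (1 : ℝ × ℝ → ℝ≥0∞) (s, x)
        = (Ici x).indicator (fun s => ENNReal.ofReal (t * Real.exp (-t * s))) s := by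
      intro s
      by_cases hs : x ≤ s
      · rw [indicator_of_mem (show s ∈ Ici x from hs),
          indicator_of_mem (show (s, x) ∈ T from ⟨hx, hs⟩)]
        simp
      · rw [indicator_of_notMem (show s ∉ Ici x from hs),
          indicator_of_notMem (show (s, x) ∉ T from fun h => hs h.2)]
        simp
    simp_rw [h1]
    rw [lintegral_indicator measurableSet_Ici, Measure.restrict_restrict measurableSet_Ici]
    have hset : Ici x ∩ Ioi 0 = Ioi x ∨ Ici x ∩ Ioi 0 = Ici x := by
      rcases eq_or_lt_of_le hx with h | h
      · left; rw [← h]; ext s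
        simp only [mem_inter_iff, mem_Ici, mem_Ioi]
        exact ⟨fun h2 => h2.2, fun h2 => ⟨le_of_lt h2, h2⟩⟩
      · right; ext s; simp only [mem_inter_iff, mem_Ici, mem_Ioi, and_iff_left_iff_imp]
        intro hs; linarith
    have hval : ∫⁻ s in Ioi x, ENNReal.ofReal (t * Real.exp (-t * s))
        = ENNReal.ofReal (Real.exp (-t * x)) := by
      have hint : IntegrableOn (fun s => t * Real.exp (-t * s)) (Ioi x) := by
        exact (exp_neg_integrableOn_Ioi x ht).const_mul t
      rw [← ofReal_integral_eq_lintegral_ofReal hint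
        (ae_of_all _ fun s => by positivity)]
      congr 1
      have hreal : ∫ s in Ioi x, Real.exp (-(t * s)) = t⁻¹ * Real.exp (-(t * x)) := by
        rw [integral_comp_mul_left_Ioi (fun u => Real.exp (-u)) x ht, integral_exp_neg_Ioi,
          smul_eq_mul]
      have hfun : (fun s : ℝ => t * Real.exp (-t * s)) = fun s => t * Real.exp (-(t * s)) := by
        funext s; rw [neg_mul]
      rw [hfun, MeasureTheory.integral_const_mul, hreal, ← mul_assoc,
        mul_inv_cancel₀ (ne_of_gt ht), one_mul, neg_mul]
    rcases hset with h | h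
    · rw [h, hval]
    · rw [h, ← restrict_Ioi_eq_restrict_Ici, hval]
  -- put together
  have swap : ∫⁻ x, (∫⁻ s in Ioi (0:ℝ), ENNReal.ofReal (t * Real.exp (-t * s)) *
        T.indicator (1 : ℝ × ℝ → ℝ≥0∞) (s, x)) ∂ν
      = ∫⁻ s in Ioi (0:ℝ), (∫⁻ x, ENNReal.ofReal (t * Real.exp (-t * s)) *
        T.indicator (1 : ℝ × ℝ → ℝ≥0∞) (s, x) ∂ν) := by
    have m1 : Measurable fun p : ℝ × ℝ => ENNReal.ofReal (t * Real.exp (-t * p.2)) := by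
      fun_prop
    have m2 : Measurable fun p : ℝ × ℝ => T.indicator (1 : ℝ × ℝ → ℝ≥0∞) (p.2, p.1) :=
      (measurable_one.indicator hmeas).comp measurable_swap
    exact lintegral_lintegral_swap (μ := ν) (ν := volume.restrict (Ioi (0:ℝ)))
      (f := fun x s => ENNReal.ofReal (t * Real.exp (-t * s)) *
        T.indicator (1 : ℝ × ℝ → ℝ≥0∞) (s, x)) ((m1.mul m2).aemeasurable)
  calc L ν t = ∫⁻ x, ENNReal.ofReal (Real.exp (-t * x)) ∂ν := rfl
    _ = ∫⁻ x, (∫⁻ s in Ioi (0:ℝ), ENNReal.ofReal (t * Real.exp (-t * s)) *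
        T.indicator (1 : ℝ × ℝ → ℝ≥0∞) (s, x)) ∂ν := by
        apply lintegral_congr_ae
        filter_upwards [ae_nonneg ν hν] with x hx
        exact (inner x hx).symm
    _ = ∫⁻ s in Ioi (0:ℝ), (∫⁻ x, ENNReal.ofReal (t * Real.exp (-t * s)) *
        T.indicator (1 : ℝ × ℝ → ℝ≥0∞) (s, x) ∂ν) := swap
    _ = ∫⁻ s in Ioi (0:ℝ), ENNReal.ofReal (t * Real.exp (-t * s)) * ν (Icc 0 s) := by
        refine setLIntegral_congr_fun measurableSet_Ioi (fun s _ => ?_)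
        rw [lintegral_const_mul _ (by
          have : (fun x : ℝ => T.indicator (1 : ℝ × ℝ → ℝ≥0∞) (s, x))
              = (Icc 0 s).indicator 1 := by ext x; exact hind s x
          rw [this]; exact measurable_one.indicator measurableSet_Icc), ← step1 s]


-- scaled Gamma integral facts
lemma gamma_integrable {t γ : ℝ} (ht : 0 < t) (hγ : 0 ≤ γ) :
    IntegrableOn (fun s : ℝ => s ^ γ * Real.exp (-(t * s))) (Ioi 0) := by
  have h := integrableOn_rpow_mul_exp_neg_mul_rpow (p := 1) (s := γ) (b := t)
    (by linarith) zero_lt_one ht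
  refine h.congr_fun (fun s hs => ?_) measurableSet_Ioi
  dsimp only
  rw [Real.rpow_one, neg_mul]

lemma gamma_scaled {t γ : ℝ} (ht : 0 < t) (hγ : 0 ≤ γ) :
    ∫ s in Ioi (0:ℝ), s ^ γ * Real.exp (-(t * s)) = t ^ (-(γ+1)) * Real.Gamma (γ+1) := by
  have h := Real.integral_rpow_mul_exp_neg_mul_Ioi (a := γ+1) (r := t) (by linarith) ht
  simp only [add_sub_cancel_right] at h
  rw [h, one_div, ← Real.rpow_neg_one, ← Real.rpow_mul ht.le]
  ring_nf

lemma gamma_scaled' {t γ : ℝ} (ht : 0 < t) (hγ : 0 ≤ γ) :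
    t ^ (γ+1) * ∫ s in Ioi (0:ℝ), s ^ γ * Real.exp (-(t * s)) = Real.Gamma (γ+1) := by
  rw [gamma_scaled ht hγ, ← mul_assoc, ← Real.rpow_add ht]
  have h0 : γ + 1 + -(γ+1) = 0 := by ring
  rw [h0, Real.rpow_zero, one_mul]


lemma abelian (ν : Measure ℝ) [SigmaFinite ν] (hν : ν (Set.Iio 0) = 0) {γ C : ℝ}
    (hγ : 0 ≤ γ) (hC : 0 ≤ C)
    (hT : Tendsto (fun a : ℝ => ν (Set.Icc 0 a) / ENNReal.ofReal (a ^ γ)) atTop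
      (𝓝 (ENNReal.ofReal (C / Real.Gamma (γ + 1))))) :
    Tendsto (fun t : ℝ => ENNReal.ofReal (t ^ γ) * L ν t) (𝓝[>] 0)
      (𝓝 (ENNReal.ofReal C)) := by
  have hΓ : 0 < Real.Gamma (γ + 1) := Real.Gamma_pos_of_pos (by linarith)
  set c : ℝ := C / Real.Gamma (γ + 1) with hc_def
  have hc : 0 ≤ c := div_nonneg hC hΓ.le
  have hcΓ : c * Real.Gamma (γ + 1) = C := div_mul_cancel₀ C hΓ.ne'
  -- finiteness of ν on compacts
  have hfin : ∀ a : ℝ, ν (Icc 0 a) ≠ ⊤ := by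
    intro a
    have h1 : ∀ᶠ b : ℝ in atTop, ν (Icc 0 b) / ENNReal.ofReal (b ^ γ) < ENNReal.ofReal c + 1 :=
      hT.eventually_lt_const (ENNReal.lt_add_right ENNReal.ofReal_ne_top one_ne_zero)
    obtain ⟨b, hb1, hb2⟩ := (h1.and (eventually_ge_atTop (max a 1))).exists
    have hbfin : ν (Icc 0 b) ≠ ⊤ := by
      intro hcon
      rw [hcon, ENNReal.top_div_of_ne_top ENNReal.ofReal_ne_top] at hb1
      exact not_top_lt hb1
    intro hcon
    apply hbfin
    have hmon := measure_mono (μ := ν)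
      (Icc_subset_Icc_right (le_trans (le_max_left a 1) hb2) : Icc (0:ℝ) a ⊆ Icc 0 b)
    rw [hcon] at hmon
    exact top_le_iff.1 hmon
  -- the real-valued limit
  set F : ℝ → ℝ := fun a => (ν (Icc 0 a)).toReal with hF_def
  have hFtends : Tendsto (fun a => F a / a ^ γ) atTop (𝓝 c) := by
    have h1 : Tendsto (fun a : ℝ => (ν (Icc 0 a) / ENNReal.ofReal (a ^ γ)).toReal) atTop
        (𝓝 (ENNReal.ofReal c).toReal) :=
      (ENNReal.tendsto_toReal ENNReal.ofReal_ne_top).comp hT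
    rw [ENNReal.toReal_ofReal hc] at h1
    refine h1.congr' ?_
    filter_upwards [eventually_ge_atTop (1:ℝ)] with a ha
    rw [ENNReal.toReal_div, ENNReal.toReal_ofReal (Real.rpow_nonneg (by linarith) γ)]
  -- the identity
  have hmeas1 : ∀ t : ℝ, Measurable fun s : ℝ =>
      ENNReal.ofReal (t * Real.exp (-t * s)) * ν (Icc 0 s) := by
    intro t
    exact Measurable.mul (by fun_prop) (measurable_nuIcc ν)
  have hident : ∀ t : ℝ, 0 < t → ENNReal.ofReal (t ^ γ) * L ν t
      = ∫⁻ s in Ioi (0:ℝ), ENNReal.ofReal (t ^ (γ+1) * Real.exp (-t * s)) * ν (Icc 0 s) := by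
    intro t ht
    rw [key_identity ν hν ht, ← lintegral_const_mul _ (hmeas1 t)]
    refine setLIntegral_congr_fun measurableSet_Ioi (fun s _ => ?_)
    rw [← mul_assoc, ← ENNReal.ofReal_mul (Real.rpow_nonneg ht.le γ), ← mul_assoc,
      ← Real.rpow_add_one ht.ne' γ]
  -- upper bound for the limsup
  have hupper : limsup (fun t : ℝ => ENNReal.ofReal (t ^ γ) * L ν t) (𝓝[>] 0)
      ≤ ENNReal.ofReal C := by
    refine ENNReal.le_of_forall_pos_le_add fun ε hε _ => ?_
    set εr : ℝ := (ε : ℝ) / Real.Gamma (γ+1) with hεr_def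
    have hεpos : (0:ℝ) < ε := hε
    have hεr0 : 0 < εr := div_pos hεpos hΓ
    have hev : ∀ᶠ a : ℝ in atTop, F a / a ^ γ < c + εr :=
      hFtends.eventually_lt_const (by linarith)
    obtain ⟨s₀, hs₀⟩ := eventually_atTop.1 (hev.and (eventually_ge_atTop (1:ℝ)))
    set s₁ : ℝ := max s₀ 1 with hs₁_def
    have hs₁pos : (0:ℝ) < s₁ := lt_of_lt_of_le one_pos (le_max_right _ _)
    have hub : ∀ s : ℝ, s₁ ≤ s → ν (Icc 0 s) ≤ ENNReal.ofReal ((c + εr) * s ^ γ) := by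
      intro s hs
      obtain ⟨h1, h2⟩ := hs₀ s (le_trans (le_max_left _ _) hs)
      have hspos : (0:ℝ) < s := lt_of_lt_of_le one_pos h2
      have hpow : (0:ℝ) < s ^ γ := Real.rpow_pos_of_pos hspos γ
      have h3 : F s ≤ (c + εr) * s ^ γ := by
        have := (div_le_iff₀ hpow).1 h1.le
        linarith
      calc ν (Icc 0 s) = ENNReal.ofReal (F s) := (ENNReal.ofReal_toReal (hfin s)).symm
        _ ≤ ENNReal.ofReal ((c + εr) * s ^ γ) := ENNReal.ofReal_le_ofReal h3
    set K : ℝ≥0∞ := ν (Icc 0 s₁) * ENNReal.ofReal s₁ with hK_def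
    have hKtop : K ≠ ⊤ := ENNReal.mul_ne_top (hfin s₁) ENNReal.ofReal_ne_top
    have hbound : ∀ t : ℝ, 0 < t →
        ENNReal.ofReal (t ^ γ) * L ν t ≤
          ENNReal.ofReal (t ^ (γ+1)) * K + ENNReal.ofReal ((c + εr) * Real.Gamma (γ+1)) := by
      intro t ht
      rw [hident t ht, ← Ioc_union_Ioi_eq_Ioi hs₁pos.le,
        lintegral_union measurableSet_Ioi Ioc_disjoint_Ioi_same]
      refine add_le_add ?_ ?_
      · calc ∫⁻ s in Ioc 0 s₁, ENNReal.ofReal (t ^ (γ+1) * Real.exp (-t * s)) * ν (Icc 0 s)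
            ≤ ∫⁻ _ in Ioc 0 s₁, ENNReal.ofReal (t ^ (γ+1)) * ν (Icc 0 s₁) := by
              refine setLIntegral_mono' measurableSet_Ioc fun s hs => ?_
              refine mul_le_mul' (ENNReal.ofReal_le_ofReal ?_)
                (measure_mono (Icc_subset_Icc_right hs.2))
              have he : Real.exp (-t * s) ≤ 1 := by
                rw [Real.exp_le_one_iff]
                nlinarith [hs.1]
              nlinarith [Real.rpow_nonneg ht.le (γ+1)]
          _ = ENNReal.ofReal (t ^ (γ+1)) * ν (Icc 0 s₁) * volume (Ioc 0 s₁) :=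
              setLIntegral_const _ _
          _ = ENNReal.ofReal (t ^ (γ+1)) * K := by
              rw [Real.volume_Ioc, hK_def, sub_zero, mul_assoc]
      · calc ∫⁻ s in Ioi s₁, ENNReal.ofReal (t ^ (γ+1) * Real.exp (-t * s)) * ν (Icc 0 s)
            ≤ ∫⁻ s in Ioi s₁,
              ENNReal.ofReal (((c + εr) * t ^ (γ+1)) * (s ^ γ * Real.exp (-(t * s)))) := by
              refine setLIntegral_mono' measurableSet_Ioi fun s hs => ?_
              calc ENNReal.ofReal (t ^ (γ+1) * Real.exp (-t * s)) * ν (Icc 0 s)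
                  ≤ ENNReal.ofReal (t ^ (γ+1) * Real.exp (-t * s)) *
                    ENNReal.ofReal ((c + εr) * s ^ γ) := by
                    exact mul_le_mul' le_rfl (hub s (le_of_lt hs))
                _ = ENNReal.ofReal (((c + εr) * t ^ (γ+1)) * (s ^ γ * Real.exp (-(t * s)))) := by
                    rw [← ENNReal.ofReal_mul (mul_nonneg (Real.rpow_nonneg ht.le _)
                      (Real.exp_nonneg _))]
                    congr 1
                    rw [neg_mul]
                    ring
          _ ≤ ∫⁻ s in Ioi 0,
              ENNReal.ofReal (((c + εr) * t ^ (γ+1)) * (s ^ γ * Real.exp (-(t * s)))) :=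
              lintegral_mono_set (Ioi_subset_Ioi hs₁pos.le)
          _ = ENNReal.ofReal ((c + εr) * Real.Gamma (γ+1)) := by
              rw [← ofReal_integral_eq_lintegral_ofReal
                (((gamma_integrable ht hγ).const_mul _))
                ((ae_restrict_iff' measurableSet_Ioi).2 (ae_of_all _ fun s hs =>
                  mul_nonneg (mul_nonneg (by linarith) (Real.rpow_nonneg ht.le _))
                    (mul_nonneg (Real.rpow_nonneg (le_of_lt hs) _) (Real.exp_nonneg _))))]
              rw [MeasureTheory.integral_const_mul, mul_assoc, gamma_scaled' ht hγ]
    have hBtends : Tendsto (fun t : ℝ => ENNReal.ofReal (t ^ (γ+1)) * K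
        + ENNReal.ofReal ((c + εr) * Real.Gamma (γ+1))) (𝓝[>] 0)
        (𝓝 (ENNReal.ofReal ((c + εr) * Real.Gamma (γ+1)))) := by
      have h0 : Tendsto (fun t : ℝ => ENNReal.ofReal (t ^ (γ+1))) (𝓝[>] 0) (𝓝 0) := by
        have hr : Tendsto (fun t : ℝ => t ^ (γ+1)) (𝓝[>] 0) (𝓝 0) := by
          have := (Real.continuousAt_rpow_const 0 (γ+1) (Or.inr (by linarith))).tendsto
          rw [Real.zero_rpow (by linarith : γ + 1 ≠ 0)] at this
          exact this.mono_left nhdsWithin_le_nhds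
        simpa using ENNReal.tendsto_ofReal hr
      have h1 := ENNReal.Tendsto.mul_const h0 (Or.inr hKtop)
      rw [zero_mul] at h1
      have h2 := h1.add (tendsto_const_nhds
        (x := ENNReal.ofReal ((c + εr) * Real.Gamma (γ+1))) (f := 𝓝[>] (0:ℝ)))
      rw [zero_add] at h2
      exact h2
    have hle : limsup (fun t : ℝ => ENNReal.ofReal (t ^ γ) * L ν t) (𝓝[>] 0)
        ≤ limsup (fun t : ℝ => ENNReal.ofReal (t ^ (γ+1)) * K
          + ENNReal.ofReal ((c + εr) * Real.Gamma (γ+1))) (𝓝[>] 0) := by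
      refine limsup_le_limsup ?_
      filter_upwards [eventually_mem_nhdsWithin] with t ht
      exact hbound t ht
    rw [hBtends.limsup_eq] at hle
    refine le_trans hle (le_of_eq ?_)
    have hkey : (c + εr) * Real.Gamma (γ+1) = C + (ε:ℝ) := by
      rw [add_mul, hcΓ, hεr_def, div_mul_cancel₀ _ hΓ.ne']
    rw [hkey, ENNReal.ofReal_add hC hεpos.le, ENNReal.ofReal_coe_nnreal]
  -- lower bound for the liminf
  have hlower : ENNReal.ofReal C ≤
      liminf (fun t : ℝ => ENNReal.ofReal (t ^ γ) * L ν t) (𝓝[>] 0) := by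
    rcases eq_or_lt_of_le hC with hC0 | hC0
    · rw [← hC0]
      simp
    apply le_of_forall_lt
    intro b hb
    have hbtop : b ≠ ⊤ := (hb.trans_le le_top).ne
    set br : ℝ := b.toReal with hbr_def
    have hbr0 : 0 ≤ br := ENNReal.toReal_nonneg
    have hbr : br < C := by
      have := (ENNReal.toReal_lt_toReal hbtop ENNReal.ofReal_ne_top).2 hb
      rwa [ENNReal.toReal_ofReal hC] at this
    set εr : ℝ := (C - br) / (2 * Real.Gamma (γ+1)) with hεr_def
    have hεr0 : 0 < εr := div_pos (by linarith) (by linarith)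
    have hεrΓ : εr * Real.Gamma (γ+1) = (C - br) / 2 := by
      rw [hεr_def]
      field_simp
    have hεrc : εr < c := by
      have h1 : εr * Real.Gamma (γ+1) < c * Real.Gamma (γ+1) := by
        rw [hεrΓ, hcΓ]; linarith
      exact lt_of_mul_lt_mul_right h1 hΓ.le
    have hev : ∀ᶠ a : ℝ in atTop, c - εr < F a / a ^ γ :=
      hFtends.eventually_const_lt (by linarith)
    obtain ⟨s₀, hs₀⟩ := eventually_atTop.1 (hev.and (eventually_ge_atTop (1:ℝ)))
    set s₁ : ℝ := max s₀ 1 with hs₁_def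
    have hs₁pos : (0:ℝ) < s₁ := lt_of_lt_of_le one_pos (le_max_right _ _)
    have hlb : ∀ s : ℝ, s₁ ≤ s → ENNReal.ofReal ((c - εr) * s ^ γ) ≤ ν (Icc 0 s) := by
      intro s hs
      obtain ⟨h1, h2⟩ := hs₀ s (le_trans (le_max_left _ _) hs)
      have hspos : (0:ℝ) < s := lt_of_lt_of_le one_pos h2
      have hpow : (0:ℝ) < s ^ γ := Real.rpow_pos_of_pos hspos γ
      have h3 : (c - εr) * s ^ γ ≤ F s := by
        have := (lt_div_iff₀ hpow).1 h1
        linarith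
      calc ENNReal.ofReal ((c - εr) * s ^ γ) ≤ ENNReal.ofReal (F s) :=
            ENNReal.ofReal_le_ofReal h3
        _ = ν (Icc 0 s) := ENNReal.ofReal_toReal (hfin s)
    -- integrability facts
    have hint : ∀ t : ℝ, 0 < t →
        IntegrableOn (fun s : ℝ => s ^ γ * Real.exp (-(t * s))) (Ioi s₁) :=
      fun t ht => (gamma_integrable ht hγ).mono_set (Ioi_subset_Ioi hs₁pos.le)
    have hintIoc : ∀ t : ℝ, 0 < t →
        IntegrableOn (fun s : ℝ => s ^ γ * Real.exp (-(t * s))) (Ioc 0 s₁) :=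
      fun t ht => (gamma_integrable ht hγ).mono_set Ioc_subset_Ioi_self
    -- lower bound on S t
    have hbound : ∀ t : ℝ, 0 < t →
        ENNReal.ofReal ((c - εr) * (t ^ (γ+1) *
            ∫ s in Ioi s₁, s ^ γ * Real.exp (-(t * s))))
          ≤ ENNReal.ofReal (t ^ γ) * L ν t := by
      intro t ht
      rw [hident t ht]
      have heq : ENNReal.ofReal ((c - εr) * (t ^ (γ+1) *
            ∫ s in Ioi s₁, s ^ γ * Real.exp (-(t * s))))
          = ∫⁻ s in Ioi s₁,
            ENNReal.ofReal (((c - εr) * t ^ (γ+1)) * (s ^ γ * Real.exp (-(t * s)))) := by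
        rw [← mul_assoc, ← MeasureTheory.integral_const_mul]
        exact ofReal_integral_eq_lintegral_ofReal ((hint t ht).const_mul _)
          ((ae_restrict_iff' measurableSet_Ioi).2 (ae_of_all _ fun s hs =>
            mul_nonneg (mul_nonneg (by linarith) (Real.rpow_nonneg ht.le _))
              (mul_nonneg (Real.rpow_nonneg (le_trans hs₁pos.le (le_of_lt hs)) _)
                (Real.exp_nonneg _))))
      rw [heq]
      refine le_trans (setLIntegral_mono' measurableSet_Ioi fun s hs => ?_)
        (lintegral_mono_set (Ioi_subset_Ioi hs₁pos.le))
      calc ENNReal.ofReal (((c - εr) * t ^ (γ+1)) * (s ^ γ * Real.exp (-(t * s))))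
          = ENNReal.ofReal (t ^ (γ+1) * Real.exp (-t * s)) *
            ENNReal.ofReal ((c - εr) * s ^ γ) := by
            rw [← ENNReal.ofReal_mul (by positivity)]
            congr 1
            rw [neg_mul]
            ring
        _ ≤ ENNReal.ofReal (t ^ (γ+1) * Real.exp (-t * s)) * ν (Icc 0 s) :=
            mul_le_mul' le_rfl (hlb s (le_of_lt hs))
    -- the lower bounding function tends to ofReal ((c-εr)*Γ(γ+1))
    have hψ : Tendsto (fun t : ℝ => (c - εr) * (t ^ (γ+1) *
        ∫ s in Ioi s₁, s ^ γ * Real.exp (-(t * s)))) (𝓝[>] 0)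
        (𝓝 ((c - εr) * Real.Gamma (γ+1))) := by
      have hsplit : ∀ t : ℝ, 0 < t →
          t ^ (γ+1) * ∫ s in Ioi s₁, s ^ γ * Real.exp (-(t * s))
          = Real.Gamma (γ+1) - t ^ (γ+1) * ∫ s in Ioc 0 s₁, s ^ γ * Real.exp (-(t * s)) := by
        intro t ht
        have hu : ∫ s in Ioi (0:ℝ), s ^ γ * Real.exp (-(t * s))
            = (∫ s in Ioc 0 s₁, s ^ γ * Real.exp (-(t * s)))
              + ∫ s in Ioi s₁, s ^ γ * Real.exp (-(t * s)) := by
          rw [← setIntegral_union Ioc_disjoint_Ioi_same measurableSet_Ioi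
            (hintIoc t ht) (hint t ht), Ioc_union_Ioi_eq_Ioi hs₁pos.le]
        have := gamma_scaled' ht hγ
        rw [hu] at this
        ring_nf
        ring_nf at this
        linarith
      have hR : Tendsto (fun t : ℝ =>
          t ^ (γ+1) * ∫ s in Ioc 0 s₁, s ^ γ * Real.exp (-(t * s))) (𝓝[>] 0) (𝓝 0) := by
        have hM : ∀ t : ℝ, 0 < t →
            ∫ s in Ioc 0 s₁, s ^ γ * Real.exp (-(t * s)) ≤ s₁ ^ γ * s₁ := by
          intro t ht
          calc ∫ s in Ioc 0 s₁, s ^ γ * Real.exp (-(t * s))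
              ≤ ∫ _ in Ioc (0:ℝ) s₁, s₁ ^ γ := by
                refine setIntegral_mono_on (hintIoc t ht)
                  (integrableOn_const
                    (by rw [Real.volume_Ioc]; exact ENNReal.ofReal_ne_top))
                  measurableSet_Ioc fun s hs => ?_
                have h1 : s ^ γ ≤ s₁ ^ γ := Real.rpow_le_rpow hs.1.le hs.2 hγ
                have h2 : Real.exp (-(t * s)) ≤ 1 := by
                  rw [Real.exp_le_one_iff]
                  nlinarith [hs.1]
                nlinarith [Real.rpow_nonneg (le_of_lt hs.1) γ]
            _ = s₁ ^ γ * s₁ := by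
                rw [setIntegral_const, smul_eq_mul, Real.volume_real_Ioc_of_le hs₁pos.le, sub_zero,
                  mul_comm]
        refine squeeze_zero' (g := fun t => t ^ (γ+1) * (s₁ ^ γ * s₁)) ?_ ?_ ?_
        · filter_upwards [eventually_mem_nhdsWithin] with t (ht : t ∈ Ioi (0:ℝ))
          have h0 : 0 ≤ ∫ s in Ioc 0 s₁, s ^ γ * Real.exp (-(t * s)) :=
            setIntegral_nonneg measurableSet_Ioc fun s hs =>
              mul_nonneg (Real.rpow_nonneg hs.1.le _) (Real.exp_nonneg _)
          exact mul_nonneg (Real.rpow_nonneg (le_of_lt ht) _) h0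
        · filter_upwards [eventually_mem_nhdsWithin] with t (ht : t ∈ Ioi (0:ℝ))
          have hpow : (0:ℝ) ≤ t ^ (γ+1) := Real.rpow_nonneg (le_of_lt ht) _
          exact mul_le_mul_of_nonneg_left (hM t ht) hpow
        · have hr : Tendsto (fun t : ℝ => t ^ (γ+1)) (𝓝[>] 0) (𝓝 0) := by
            have := (Real.continuousAt_rpow_const 0 (γ+1) (Or.inr (by linarith))).tendsto
            rw [Real.zero_rpow (by linarith : γ + 1 ≠ 0)] at this
            exact this.mono_left nhdsWithin_le_nhds
          simpa using hr.mul_const (s₁ ^ γ * s₁)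
      have h1 : Tendsto (fun t : ℝ => Real.Gamma (γ+1) - t ^ (γ+1) *
          ∫ s in Ioc 0 s₁, s ^ γ * Real.exp (-(t * s))) (𝓝[>] 0) (𝓝 (Real.Gamma (γ+1))) := by
        have := (tendsto_const_nhds (x := Real.Gamma (γ+1)) (f := 𝓝[>] (0:ℝ))).sub hR
        simpa using this
      have h2 : Tendsto (fun t : ℝ => t ^ (γ+1) *
          ∫ s in Ioi s₁, s ^ γ * Real.exp (-(t * s))) (𝓝[>] 0) (𝓝 (Real.Gamma (γ+1))) := by
        refine h1.congr' ?_
        filter_upwards [eventually_mem_nhdsWithin] with t (ht : t ∈ Ioi (0:ℝ))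
        exact (hsplit t ht).symm
      exact h2.const_mul (c - εr)
    have hB : Tendsto (fun t : ℝ => ENNReal.ofReal ((c - εr) * (t ^ (γ+1) *
        ∫ s in Ioi s₁, s ^ γ * Real.exp (-(t * s))))) (𝓝[>] 0)
        (𝓝 (ENNReal.ofReal ((c - εr) * Real.Gamma (γ+1)))) := ENNReal.tendsto_ofReal hψ
    have hliminf : ENNReal.ofReal ((c - εr) * Real.Gamma (γ+1)) ≤
        liminf (fun t : ℝ => ENNReal.ofReal (t ^ γ) * L ν t) (𝓝[>] 0) := by
      rw [← hB.liminf_eq]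
      refine liminf_le_liminf ?_
      filter_upwards [eventually_mem_nhdsWithin] with t (ht : t ∈ Ioi (0:ℝ))
      exact hbound t ht
    refine lt_of_lt_of_le ?_ hliminf
    have hval : (c - εr) * Real.Gamma (γ+1) = (C + br) / 2 := by
      rw [sub_mul, hcΓ, hεrΓ]
      ring
    rw [hval]
    have hb' : b = ENNReal.ofReal br := (ENNReal.ofReal_toReal hbtop).symm
    rw [hb']
    rw [ENNReal.ofReal_lt_ofReal_iff (by linarith)]
    linarith
  exact tendsto_of_le_liminf_of_limsup_le hlower hupper

end KaramataAux

namespace Tb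


noncomputable def L (ν : Measure ℝ) (t : ℝ) : ℝ≥0∞ :=
  ∫⁻ x, ENNReal.ofReal (Real.exp (-t * x)) ∂ν

lemma ae_nonneg (ν : Measure ℝ) (hν : ν (Set.Iio 0) = 0) : ∀ᵐ x ∂ν, 0 ≤ x := by
  rw [ae_iff]; convert hν using 2; ext x; simp [not_le]

/-- `L` evaluated via the Bochner integral. -/
lemma L_toReal (ν : Measure ℝ) (s : ℝ) :
    (L ν s).toReal = ∫ x, Real.exp (-s * x) ∂ν := by
  rw [integral_eq_lintegral_of_nonneg_ae (ae_of_all _ fun x => Real.exp_nonneg _)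
    (Continuous.aestronglyMeasurable (by fun_prop))]
  rfl

lemma exp_integrable (ν : Measure ℝ) {t : ℝ} (hfin : L ν t ≠ ⊤) :
    Integrable (fun x => Real.exp (-t * x)) ν := by
  refine ⟨Continuous.aestronglyMeasurable (by fun_prop), ?_⟩
  rw [hasFiniteIntegral_iff_ofReal (ae_of_all _ fun x => Real.exp_nonneg _)]
  exact lt_top_iff_ne_top.2 hfin

/-- Monomial limits in `ℝ≥0∞`. -/
lemma monomial_limit (ν : Measure ℝ) {γ C : ℝ}
    (hS : Tendsto (fun t : ℝ => ENNReal.ofReal (t ^ γ) * L ν t) (𝓝[>] 0)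
      (𝓝 (ENNReal.ofReal C))) {k : ℕ} (hk : 1 ≤ k) :
    Tendsto (fun t : ℝ => ENNReal.ofReal (t ^ γ) * L ν ((k : ℝ) * t)) (𝓝[>] 0)
      (𝓝 (ENNReal.ofReal ((k : ℝ) ^ (-γ) * C))) := by
  have hk0 : (0:ℝ) < (k:ℝ) := by exact_mod_cast hk
  have hmap : Tendsto (fun t : ℝ => (k:ℝ) * t) (𝓝[>] 0) (𝓝[>] 0) := by
    apply tendsto_nhdsWithin_of_tendsto_nhds_of_eventually_within
    · have h1 : Tendsto (fun t : ℝ => (k:ℝ) * t) (𝓝 0) (𝓝 ((k:ℝ) * 0)) :=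
        (continuous_const.mul continuous_id).tendsto 0
      rw [mul_zero] at h1
      exact h1.mono_left nhdsWithin_le_nhds
    · filter_upwards [eventually_mem_nhdsWithin] with t (ht : t ∈ Ioi (0:ℝ))
      exact mul_pos hk0 ht
  have hcomp := hS.comp hmap
  have hmul := ENNReal.Tendsto.const_mul (a := ENNReal.ofReal ((k:ℝ) ^ (-γ))) hcomp
    (Or.inr ENNReal.ofReal_ne_top)
  rw [← ENNReal.ofReal_mul (Real.rpow_nonneg hk0.le _)] at hmul
  refine hmul.congr' ?_
  filter_upwards [eventually_mem_nhdsWithin] with t (ht : t ∈ Ioi (0:ℝ))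
  show ENNReal.ofReal ((k:ℝ) ^ (-γ)) * (ENNReal.ofReal (((k:ℝ) * t) ^ γ) * L ν ((k:ℝ) * t))
      = ENNReal.ofReal (t ^ γ) * L ν ((k:ℝ) * t)
  rw [← mul_assoc, ← ENNReal.ofReal_mul (Real.rpow_nonneg hk0.le _)]
  congr 2
  rw [Real.mul_rpow hk0.le (le_of_lt ht), ← mul_assoc, ← Real.rpow_add hk0]
  rw [neg_add_cancel, Real.rpow_zero, one_mul]

/-- Monomial limits, real version. -/
lemma monomial_limit_real (ν : Measure ℝ) {γ C : ℝ} (hC : 0 ≤ C)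
    (hS : Tendsto (fun t : ℝ => ENNReal.ofReal (t ^ γ) * L ν t) (𝓝[>] 0)
      (𝓝 (ENNReal.ofReal C))) (hLfin : ∀ u : ℝ, 0 < u → L ν u ≠ ⊤) {k : ℕ} (hk : 1 ≤ k) :
    Tendsto (fun t : ℝ => t ^ γ * ∫ x, Real.exp (-((k : ℝ) * t) * x) ∂ν) (𝓝[>] 0)
      (𝓝 ((k : ℝ) ^ (-γ) * C)) := by
  have hk0 : (0:ℝ) < (k:ℝ) := by exact_mod_cast hk
  have h1 := (ENNReal.tendsto_toReal ENNReal.ofReal_ne_top).comp (monomial_limit ν hS hk)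
  rw [show (ENNReal.ofReal ((k:ℝ) ^ (-γ) * C)).toReal = (k:ℝ) ^ (-γ) * C from
    ENNReal.toReal_ofReal (mul_nonneg (Real.rpow_nonneg hk0.le _) hC)] at h1
  refine h1.congr' ?_
  filter_upwards [eventually_mem_nhdsWithin] with t (ht : t ∈ Ioi (0:ℝ))
  show (ENNReal.ofReal (t ^ γ) * L ν ((k:ℝ) * t)).toReal
      = t ^ γ * ∫ x, Real.exp (-((k : ℝ) * t) * x) ∂ν
  rw [ENNReal.toReal_mul, ENNReal.toReal_ofReal (Real.rpow_nonneg (le_of_lt ht) _),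
    L_toReal]

/-- Expansion of polynomial evaluation over the support. -/
lemma eval_expand (p : ℝ[X]) (y : ℝ) :
    p.eval y = ∑ k ∈ p.support, p.coeff k * y ^ k := by
  rw [Polynomial.eval_eq_sum, Polynomial.sum_def]

lemma mem_support_pos {p : ℝ[X]} (hp : p.coeff 0 = 0) {k : ℕ} (hk : k ∈ p.support) :
    1 ≤ k := by
  rcases Nat.eq_zero_or_pos k with h | h
  · exfalso; exact (Polynomial.mem_support_iff.1 hk) (h ▸ hp)
  · exact h

lemma exp_pow (t x : ℝ) (k : ℕ) : Real.exp (-t * x) ^ k = Real.exp (-((k:ℝ) * t) * x) := by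
  rw [← Real.exp_nat_mul]
  congr 1
  ring

lemma poly_integrable (ν : Measure ℝ) {t : ℝ} (ht : 0 < t)
    (hLfin : ∀ u : ℝ, 0 < u → L ν u ≠ ⊤) (p : ℝ[X]) (hp : p.coeff 0 = 0) :
    Integrable (fun x => p.eval (Real.exp (-t * x))) ν := by
  have : (fun x => p.eval (Real.exp (-t * x)))
      = fun x => ∑ k ∈ p.support, p.coeff k * Real.exp (-((k:ℝ) * t) * x) := by
    funext x
    rw [eval_expand]
    exact Finset.sum_congr rfl fun k _ => by rw [exp_pow]
  rw [this]
  refine integrable_finset_sum _ fun k hk => Integrable.const_mul ?_ _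
  have hkt : 0 < (k:ℝ) * t := by
    have := mem_support_pos hp hk
    have : (0:ℝ) < (k:ℝ) := by exact_mod_cast this
    positivity
  exact exp_integrable ν (hLfin _ hkt)

/-- Limits of polynomial integrals. -/
lemma poly_limit (ν : Measure ℝ) {γ C : ℝ} (hC : 0 ≤ C)
    (hS : Tendsto (fun t : ℝ => ENNReal.ofReal (t ^ γ) * L ν t) (𝓝[>] 0)
      (𝓝 (ENNReal.ofReal C))) (hLfin : ∀ u : ℝ, 0 < u → L ν u ≠ ⊤)
    (p : ℝ[X]) (hp : p.coeff 0 = 0) :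
    Tendsto (fun t : ℝ => t ^ γ * ∫ x, p.eval (Real.exp (-t * x)) ∂ν) (𝓝[>] 0)
      (𝓝 (C * ∑ k ∈ p.support, p.coeff k * (k:ℝ) ^ (-γ))) := by
  have hterm : ∀ k ∈ p.support, Tendsto
      (fun t : ℝ => p.coeff k * (t ^ γ * ∫ x, Real.exp (-((k:ℝ) * t) * x) ∂ν)) (𝓝[>] 0)
      (𝓝 (p.coeff k * ((k:ℝ) ^ (-γ) * C))) :=
    fun k hk => (monomial_limit_real ν hC hS hLfin (mem_support_pos hp hk)).const_mul _
  have hsum := tendsto_finset_sum p.support hterm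
  have hval : ∑ k ∈ p.support, p.coeff k * ((k:ℝ) ^ (-γ) * C)
      = C * ∑ k ∈ p.support, p.coeff k * (k:ℝ) ^ (-γ) := by
    rw [Finset.mul_sum]
    exact Finset.sum_congr rfl fun k _ => by ring
  rw [hval] at hsum
  refine hsum.congr' ?_
  filter_upwards [eventually_mem_nhdsWithin] with t (ht : t ∈ Ioi (0:ℝ))
  have hintk : ∀ k ∈ p.support, Integrable (fun x => p.coeff k *
      Real.exp (-((k:ℝ) * t) * x)) ν := by
    intro k hk
    refine Integrable.const_mul ?_ _
    have h1 : (0:ℝ) < (k:ℝ) := by exact_mod_cast mem_support_pos hp hk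
    exact exp_integrable ν (hLfin _ (mul_pos h1 ht))
  have : ∫ x, p.eval (Real.exp (-t * x)) ∂ν
      = ∑ k ∈ p.support, p.coeff k * ∫ x, Real.exp (-((k:ℝ) * t) * x) ∂ν := by
    have h2 : (fun x => p.eval (Real.exp (-t * x)))
        = fun x => ∑ k ∈ p.support, p.coeff k * Real.exp (-((k:ℝ) * t) * x) := by
      funext x
      rw [eval_expand]
      exact Finset.sum_congr rfl fun k _ => by rw [exp_pow]
    rw [h2, integral_finset_sum _ hintk]
    exact Finset.sum_congr rfl fun k _ => integral_const_mul _ _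
  rw [this, Finset.mul_sum]
  exact Finset.sum_congr rfl fun k _ => by ring





lemma exp_pow' (u : ℝ) (k : ℕ) : Real.exp (-u) ^ k = Real.exp (-((k:ℝ) * u)) := by
  rw [← Real.exp_nat_mul]; congr 1; ring

/-- integrability of the Gamma-type weight against a monomial exponent -/
lemma weight_integrable_k {γ : ℝ} (hγ : 0 < γ) {k : ℕ} (hk : 1 ≤ k) :
    IntegrableOn (fun u : ℝ => u ^ (γ - 1) * Real.exp (-((k:ℝ) * u))) (Ioi 0) := by
  have hk0 : (0:ℝ) < (k:ℝ) := by exact_mod_cast hk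
  have h := integrableOn_rpow_mul_exp_neg_mul_rpow (p := 1) (s := γ - 1) (b := (k:ℝ))
    (by linarith) zero_lt_one hk0
  refine h.congr_fun (fun u hu => ?_) measurableSet_Ioi
  dsimp only
  rw [Real.rpow_one, neg_mul]

/-- value of the Gamma-type integral against a monomial exponent -/
lemma weight_value_k {γ : ℝ} (hγ : 0 < γ) {k : ℕ} (hk : 1 ≤ k) :
    ∫ u in Ioi (0:ℝ), u ^ (γ - 1) * Real.exp (-((k:ℝ) * u)) = (k:ℝ) ^ (-γ) * Real.Gamma γ := by
  have hk0 : (0:ℝ) < (k:ℝ) := by exact_mod_cast hk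
  rw [Real.integral_rpow_mul_exp_neg_mul_Ioi hγ hk0]
  congr 1
  rw [one_div, ← Real.rpow_neg_one, ← Real.rpow_mul hk0.le]
  congr 1
  ring

/-- integrability of the weight against a polynomial with zero constant term -/
lemma poly_weight_integrable {γ : ℝ} (hγ : 0 < γ) (p : ℝ[X]) (hp : p.coeff 0 = 0) :
    IntegrableOn (fun u : ℝ => u ^ (γ - 1) * p.eval (Real.exp (-u))) (Ioi 0) := by
  have : (fun u : ℝ => u ^ (γ - 1) * p.eval (Real.exp (-u)))
      = fun u => ∑ k ∈ p.support, p.coeff k * (u ^ (γ - 1) * Real.exp (-((k:ℝ) * u))) := by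
    funext u
    rw [eval_expand, Finset.mul_sum]
    refine Finset.sum_congr rfl fun k _ => ?_
    rw [exp_pow']
    ring
  rw [this]
  exact integrable_finset_sum _ fun k hk =>
    ((weight_integrable_k hγ (mem_support_pos hp hk)).const_mul _)

/-- The Λ functional as an integral, `γ > 0` case. -/
lemma lambda_eq_integral {γ : ℝ} (hγ : 0 < γ) (p : ℝ[X]) (hp : p.coeff 0 = 0) :
    ∑ k ∈ p.support, p.coeff k * (k:ℝ) ^ (-γ)
      = (Real.Gamma γ)⁻¹ * ∫ u in Ioi (0:ℝ), u ^ (γ - 1) * p.eval (Real.exp (-u)) := by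
  have hΓ : 0 < Real.Gamma γ := Real.Gamma_pos_of_pos hγ
  have hI : ∫ u in Ioi (0:ℝ), u ^ (γ - 1) * p.eval (Real.exp (-u))
      = ∑ k ∈ p.support, p.coeff k * ((k:ℝ) ^ (-γ) * Real.Gamma γ) := by
    have h1 : (fun u : ℝ => u ^ (γ - 1) * p.eval (Real.exp (-u)))
        = fun u => ∑ k ∈ p.support, p.coeff k * (u ^ (γ - 1) * Real.exp (-((k:ℝ) * u))) := by
      funext u
      rw [eval_expand, Finset.mul_sum]
      refine Finset.sum_congr rfl fun k _ => ?_
      rw [exp_pow']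
      ring
    rw [h1, integral_finset_sum _ fun k hk =>
      ((weight_integrable_k hγ (mem_support_pos hp hk)).const_mul _)]
    refine Finset.sum_congr rfl fun k hk => ?_
    rw [integral_const_mul, weight_value_k hγ (mem_support_pos hp hk)]
  rw [hI, Finset.mul_sum]
  refine Finset.sum_congr rfl fun k hk => ?_
  field_simp

/-- The Λ functional for `γ = 0`. -/
lemma lambda_eq_eval_one (p : ℝ[X]) :
    ∑ k ∈ p.support, p.coeff k * (k:ℝ) ^ (-(0:ℝ)) = p.eval 1 := by
  rw [eval_expand]
  refine Finset.sum_congr rfl fun k _ => ?_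
  rw [neg_zero, Real.rpow_zero, one_pow]



/-- Weierstrass approximation with a shift. -/
lemma poly_near (g : ℝ → ℝ) (hg : Continuous g) (c : ℝ) {ε : ℝ} (hε : 0 < ε) :
    ∃ q : ℝ[X], ∀ y ∈ Icc (0:ℝ) 1, g y + c - ε ≤ q.eval y ∧ q.eval y ≤ g y + c + ε := by
  obtain ⟨q, hq⟩ := exists_polynomial_near_of_continuousOn 0 1 (fun y => g y + c)
    (hg.continuousOn.add continuousOn_const) ε hε
  refine ⟨q, fun y hy => ?_⟩
  have h := abs_lt.1 (hq y hy)
  exact ⟨by linarith [h.1], by linarith [h.2]⟩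

lemma coeff_zero_X_mul (q : ℝ[X]) : (Polynomial.X * q).coeff 0 = 0 := by
  rw [Polynomial.mul_coeff_zero, Polynomial.coeff_X_zero, zero_mul]

lemma eval_X_mul (q : ℝ[X]) (y : ℝ) : (Polynomial.X * q).eval y = y * q.eval y := by
  rw [Polynomial.eval_mul, Polynomial.eval_X]

/-- Upper polynomial construction. -/
lemma upper_construction {w ε' : ℝ} (hw : 1 < w) (hε' : 0 < ε') :
    ∃ p : ℝ[X], p.coeff 0 = 0 ∧
      (∀ y ∈ Icc (0:ℝ) 1, (if Real.exp (-1) ≤ y then (1:ℝ) else 0) ≤ p.eval y) ∧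
      (p.eval 1 ≤ 1 + 3 * ε') ∧
      (∀ u ∈ Ioi (0:ℝ), p.eval (Real.exp (-u)) ≤
        (Ioc 0 w).indicator (fun _ => (1:ℝ)) u + 3 * ε' * Real.exp (-u)) := by
  set β : ℝ := Real.exp (-1) with hβ_def
  have hβ0 : 0 < β := Real.exp_pos _
  have hβ1 : β < 1 := by
    rw [hβ_def, show (1:ℝ) = Real.exp 0 by rw [Real.exp_zero]]
    exact Real.exp_lt_exp.2 (by norm_num)
  set η : ℝ := Real.exp (-w) with hη_def
  have hη0 : 0 < η := Real.exp_pos _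
  have hηβ : η < β := Real.exp_lt_exp.2 (by linarith)
  set δ : ℝ := β - η with hδ_def
  have hδ0 : 0 < δ := by simp only [hδ_def]; linarith
  set g : ℝ → ℝ := fun y => min ((max β y)⁻¹) (max 0 ((y - η) * (β⁻¹ / δ))) with hg_def
  have hmaxpos : ∀ y : ℝ, 0 < max β y := fun y => lt_of_lt_of_le hβ0 (le_max_left _ _)
  have hgc : Continuous g := by
    refine Continuous.min ((continuous_const.max continuous_id).inv₀
      fun y => ne_of_gt (hmaxpos y)) ?_
    exact continuous_const.max ((continuous_id.sub continuous_const).mul continuous_const)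
  have hg0 : ∀ y : ℝ, 0 ≤ g y := fun y =>
    le_min (inv_nonneg.2 (hmaxpos y).le) (le_max_left _ _)
  obtain ⟨q, hq⟩ := poly_near g hgc (2 * ε') hε'
  refine ⟨Polynomial.X * q, coeff_zero_X_mul q, ?_, ?_, ?_⟩
  · -- indicator below
    intro y hy
    rw [eval_X_mul]
    have hq1 := (hq y hy).1
    by_cases hby : β ≤ y
    · have hy0 : 0 < y := lt_of_lt_of_le hβ0 hby
      rw [if_pos hby]
      have hmax : max β y = y := max_eq_right hby
      have hramp : β⁻¹ ≤ max 0 ((y - η) * (β⁻¹ / δ)) := by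
        have h1 : β⁻¹ = δ * (β⁻¹ / δ) := by field_simp
        have h2 : δ * (β⁻¹ / δ) ≤ (y - η) * (β⁻¹ / δ) := by
          have hδy : δ ≤ y - η := by simp only [hδ_def]; linarith
          have : 0 ≤ β⁻¹ / δ := by positivity
          nlinarith
        calc β⁻¹ = δ * (β⁻¹ / δ) := h1
          _ ≤ (y - η) * (β⁻¹ / δ) := h2
          _ ≤ max 0 ((y - η) * (β⁻¹ / δ)) := le_max_right _ _
      have hinvle : y⁻¹ ≤ β⁻¹ := inv_anti₀ hβ0 hby
      have hgy : g y = y⁻¹ := by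
        rw [hg_def]
        simp only [hmax]
        exact min_eq_left (le_trans hinvle hramp)
      have hgq : g y ≤ q.eval y := by linarith
      calc (1:ℝ) = y * y⁻¹ := (mul_inv_cancel₀ hy0.ne').symm
        _ = y * g y := by rw [hgy]
        _ ≤ y * q.eval y := mul_le_mul_of_nonneg_left (by linarith) hy0.le
    · rw [if_neg hby]
      have : 0 ≤ q.eval y := by linarith [hg0 y]
      exact mul_nonneg hy.1 this
  · -- value at 1
    rw [eval_X_mul, one_mul]
    have hq2 := (hq 1 ⟨zero_le_one, le_refl 1⟩).2
    have hg1 : g 1 ≤ 1 := by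
      rw [hg_def]
      refine le_trans (min_le_left _ _) ?_
      rw [max_eq_right hβ1.le, inv_one]
    linarith
  · -- bound through the indicator
    intro u hu
    rw [eval_X_mul]
    set y : ℝ := Real.exp (-u) with hy_def
    have hy0 : 0 < y := Real.exp_pos _
    have hy1 : y ≤ 1 := by
      rw [hy_def, show (1:ℝ) = Real.exp 0 by rw [Real.exp_zero]]
      exact Real.exp_le_exp.2 (by simp only [mem_Ioi] at hu; linarith)
    have hq2 := (hq y ⟨hy0.le, hy1⟩).2
    have hstep : y * q.eval y ≤ y * g y + 3 * ε' * y := by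
      have := mul_le_mul_of_nonneg_left hq2 hy0.le
      nlinarith
    refine le_trans hstep (add_le_add ?_ le_rfl)
    by_cases huw : u ≤ w
    · rw [indicator_of_mem (Set.mem_Ioc.2 ⟨hu, huw⟩)]
      have h1 : g y ≤ (max β y)⁻¹ := min_le_left _ _
      have h2 : (max β y)⁻¹ ≤ y⁻¹ := inv_anti₀ hy0 (le_max_right _ _)
      calc y * g y ≤ y * y⁻¹ := mul_le_mul_of_nonneg_left (le_trans h1 h2) hy0.le
        _ = 1 := mul_inv_cancel₀ hy0.ne'
    · rw [indicator_of_notMem (fun hmem => huw hmem.2)]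
      have hyη : y < η := by
        rw [hy_def, hη_def]
        exact Real.exp_lt_exp.2 (by push_neg at huw; linarith)
      have hneg : (y - η) * (β⁻¹ / δ) ≤ 0 := by
        have : 0 ≤ β⁻¹ / δ := by positivity
        nlinarith
      have hg_le : g y ≤ 0 := le_trans (min_le_right _ _) (by rw [max_eq_left hneg])
      exact mul_nonpos_of_nonneg_of_nonpos hy0.le hg_le

/-- Lower polynomial construction. -/
lemma lower_construction {v ε' : ℝ} (hv0 : 0 < v) (hv1 : v < 1) (hε' : 0 < ε') :
    ∃ p : ℝ[X], p.coeff 0 = 0 ∧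
      (∀ y ∈ Icc (0:ℝ) 1, p.eval y ≤ (if Real.exp (-1) ≤ y then (1:ℝ) else 0)) ∧
      (1 - 3 * ε' ≤ p.eval 1) ∧
      (∀ u ∈ Ioi (0:ℝ), (Ioc 0 v).indicator (fun _ => (1:ℝ)) u - 3 * ε' * Real.exp (-u)
        ≤ p.eval (Real.exp (-u))) := by
  set β : ℝ := Real.exp (-1) with hβ_def
  have hβ0 : 0 < β := Real.exp_pos _
  have hβ1 : β < 1 := by
    rw [hβ_def, show (1:ℝ) = Real.exp 0 by rw [Real.exp_zero]]
    exact Real.exp_lt_exp.2 (by norm_num)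
  set θ : ℝ := Real.exp (-v) with hθ_def
  have hθβ : β < θ := Real.exp_lt_exp.2 (by linarith)
  have hθ1 : θ ≤ 1 := by
    rw [hθ_def, show (1:ℝ) = Real.exp 0 by rw [Real.exp_zero]]
    exact Real.exp_le_exp.2 (by linarith)
  set δ : ℝ := θ - β with hδ_def
  have hδ0 : 0 < δ := by simp only [hδ_def]; linarith
  set g : ℝ → ℝ := fun y => (max β y)⁻¹ * max 0 (min 1 ((y - β) / δ)) with hg_def
  have hmaxpos : ∀ y : ℝ, 0 < max β y := fun y => lt_of_lt_of_le hβ0 (le_max_left _ _)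
  have hgc : Continuous g := by
    refine Continuous.mul ((continuous_const.max continuous_id).inv₀
      fun y => ne_of_gt (hmaxpos y)) ?_
    exact continuous_const.max (continuous_const.min
      ((continuous_id.sub continuous_const).div_const δ))
  have hg0 : ∀ y : ℝ, 0 ≤ g y := fun y =>
    mul_nonneg (inv_nonneg.2 (hmaxpos y).le) (le_max_left _ _)
  have hramp1 : ∀ y : ℝ, max 0 (min 1 ((y - β) / δ)) ≤ 1 :=
    fun y => max_le zero_le_one (min_le_left _ _)
  obtain ⟨q, hq⟩ := poly_near g hgc (-(2 * ε')) hε'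
  refine ⟨Polynomial.X * q, coeff_zero_X_mul q, ?_, ?_, ?_⟩
  · -- below the indicator
    intro y hy
    rw [eval_X_mul]
    have hq2 := (hq y hy).2
    have hqg : q.eval y ≤ g y := by linarith
    by_cases hby : β ≤ y
    · have hy0 : 0 < y := lt_of_lt_of_le hβ0 hby
      rw [if_pos hby]
      have hmax : max β y = y := max_eq_right hby
      calc y * q.eval y ≤ y * g y := mul_le_mul_of_nonneg_left hqg hy0.le
        _ = (y * y⁻¹) * max 0 (min 1 ((y - β) / δ)) := by
            rw [hg_def]; simp only [hmax]; ring
        _ = max 0 (min 1 ((y - β) / δ)) := by rw [mul_inv_cancel₀ hy0.ne', one_mul]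
        _ ≤ 1 := hramp1 y
    · rw [if_neg hby]
      push_neg at hby
      have hrampzero : max 0 (min 1 ((y - β) / δ)) = 0 := by
        have h1 : (y - β) / δ < 0 := div_neg_of_neg_of_pos (by linarith) hδ0
        rw [min_eq_right (by linarith), max_eq_left (by linarith)]
      have hgy : g y = 0 := by rw [hg_def]; simp only [hrampzero, mul_zero]
      have : q.eval y ≤ 0 := by rw [hgy] at hqg; exact hqg
      exact mul_nonpos_of_nonneg_of_nonpos hy.1 this
  · -- value at 1
    rw [eval_X_mul, one_mul]
    have hq1 := (hq 1 ⟨zero_le_one, le_refl 1⟩).1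
    have hg1 : g 1 = 1 := by
      rw [hg_def]
      have h1 : max β (1:ℝ) = 1 := max_eq_right hβ1.le
      have h2 : (1:ℝ) ≤ (1 - β) / δ := by
        rw [le_div_iff₀ hδ0]
        simp only [hδ_def]
        linarith
      simp only [h1, inv_one, min_eq_left h2, max_eq_right zero_le_one, one_mul]
    linarith
  · -- bound through the indicator
    intro u hu
    rw [eval_X_mul]
    set y : ℝ := Real.exp (-u) with hy_def
    have hy0 : 0 < y := Real.exp_pos _
    have hy1 : y ≤ 1 := by
      rw [hy_def, show (1:ℝ) = Real.exp 0 by rw [Real.exp_zero]]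
      exact Real.exp_le_exp.2 (by simp only [mem_Ioi] at hu; linarith)
    have hq1 := (hq y ⟨hy0.le, hy1⟩).1
    have hstep : y * g y - 3 * ε' * y ≤ y * q.eval y := by
      have := mul_le_mul_of_nonneg_left hq1 hy0.le
      nlinarith
    refine le_trans (add_le_add ?_ (le_refl (-(3 * ε' * y)))) hstep
    by_cases huv : u ≤ v
    · rw [indicator_of_mem (Set.mem_Ioc.2 ⟨hu, huv⟩)]
      have hyθ : θ ≤ y := by
        rw [hy_def, hθ_def]
        exact Real.exp_le_exp.2 (by linarith)
      have hby : β ≤ y := le_trans hθβ.le hyθ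
      have hmax : max β y = y := max_eq_right hby
      have hrampone : max 0 (min 1 ((y - β) / δ)) = 1 := by
        have h2 : (1:ℝ) ≤ (y - β) / δ := by
          rw [le_div_iff₀ hδ0]
          simp only [hδ_def]
          linarith
        rw [min_eq_left h2, max_eq_right zero_le_one]
      have : y * g y = 1 := by
        rw [hg_def]
        simp only [hmax, hrampone, mul_one]
        exact mul_inv_cancel₀ hy0.ne'
      rw [this]
    · rw [indicator_of_notMem (fun hmem => huv hmem.2)]
      exact mul_nonneg hy0.le (hg0 y)


lemma weight_integrable {γ : ℝ} (hγ : 0 < γ) :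
    IntegrableOn (fun u : ℝ => u ^ (γ - 1) * Real.exp (-u)) (Ioi 0) :=
  (Real.GammaIntegral_convergent hγ).congr_fun (fun u _ => mul_comm _ _) measurableSet_Ioi

lemma weight_value {γ : ℝ} (hγ : 0 < γ) :
    ∫ u in Ioi (0:ℝ), u ^ (γ - 1) * Real.exp (-u) = Real.Gamma γ := by
  rw [Real.Gamma_eq_integral hγ]
  exact setIntegral_congr_fun measurableSet_Ioi fun u _ => mul_comm _ _

lemma ind_rpow_integrable {γ w : ℝ} (hγ : 0 < γ) (hw : 0 < w) :
    Integrable (fun u : ℝ => (Ioc 0 w).indicator (fun u => u ^ (γ - 1)) u)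
      (volume.restrict (Ioi 0)) := by
  rw [integrable_indicator_iff measurableSet_Ioc]
  have h1 : IntegrableOn (fun u : ℝ => u ^ (γ - 1)) (Ioc 0 w) volume :=
    (intervalIntegral.intervalIntegrable_rpow' (by linarith)).1
  rw [IntegrableOn, Measure.restrict_restrict measurableSet_Ioc,
    inter_eq_left.2 Ioc_subset_Ioi_self]
  exact h1

lemma ind_rpow_value {γ w : ℝ} (hγ : 0 < γ) (hw : 0 < w) :
    ∫ u in Ioi (0:ℝ), (Ioc 0 w).indicator (fun u => u ^ (γ - 1)) u = w ^ γ / γ := by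
  rw [integral_indicator measurableSet_Ioc, Measure.restrict_restrict measurableSet_Ioc,
    inter_eq_left.2 Ioc_subset_Ioi_self, ← intervalIntegral.integral_of_le hw.le,
    integral_rpow (Or.inl (by linarith)), sub_add_cancel γ 1,
    Real.zero_rpow hγ.ne', sub_zero]

/-- Λ upper bound for `γ > 0`. -/
lemma lambda_upper_bound {γ w ε' : ℝ} (hγ : 0 < γ) (hw : 0 < w) (hε' : 0 ≤ ε')
    (p : ℝ[X]) (hp : p.coeff 0 = 0)
    (hb : ∀ u ∈ Ioi (0:ℝ), p.eval (Real.exp (-u)) ≤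
      (Ioc 0 w).indicator (fun _ => (1:ℝ)) u + 3 * ε' * Real.exp (-u)) :
    ∑ k ∈ p.support, p.coeff k * (k:ℝ) ^ (-γ)
      ≤ w ^ γ / (γ * Real.Gamma γ) + 3 * ε' := by
  have hΓ : 0 < Real.Gamma γ := Real.Gamma_pos_of_pos hγ
  rw [lambda_eq_integral hγ p hp]
  have hintB : IntegrableOn (fun u : ℝ => (Ioc 0 w).indicator (fun u => u ^ (γ - 1)) u
      + 3 * ε' * (u ^ (γ - 1) * Real.exp (-u))) (Ioi 0) :=
    (ind_rpow_integrable hγ hw).add ((weight_integrable hγ).const_mul _)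
  have hmono : ∫ u in Ioi (0:ℝ), u ^ (γ - 1) * p.eval (Real.exp (-u))
      ≤ ∫ u in Ioi (0:ℝ), ((Ioc 0 w).indicator (fun u => u ^ (γ - 1)) u
        + 3 * ε' * (u ^ (γ - 1) * Real.exp (-u))) := by
    refine setIntegral_mono_on (poly_weight_integrable hγ p hp) hintB
      measurableSet_Ioi fun u hu => ?_
    have hu0 : (0:ℝ) < u := hu
    have hrp : (0:ℝ) ≤ u ^ (γ - 1) := Real.rpow_nonneg hu0.le _
    have h1 := mul_le_mul_of_nonneg_left (hb u hu) hrp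
    refine le_trans h1 ?_
    have h2 : u ^ (γ - 1) * (Ioc 0 w).indicator (fun _ => (1:ℝ)) u
        = (Ioc 0 w).indicator (fun u => u ^ (γ - 1)) u := by
      by_cases hm : u ∈ Ioc 0 w
      · rw [indicator_of_mem hm, indicator_of_mem hm, mul_one]
      · rw [indicator_of_notMem hm, indicator_of_notMem hm, mul_zero]
    rw [mul_add, h2]
    apply add_le_add le_rfl
    ring_nf
    exact le_rfl
  have hBval : ∫ u in Ioi (0:ℝ), ((Ioc 0 w).indicator (fun u => u ^ (γ - 1)) u
      + 3 * ε' * (u ^ (γ - 1) * Real.exp (-u))) = w ^ γ / γ + 3 * ε' * Real.Gamma γ := by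
    rw [integral_add (ind_rpow_integrable hγ hw) ((weight_integrable hγ).const_mul _),
      ind_rpow_value hγ hw, MeasureTheory.integral_const_mul, weight_value hγ]
  rw [hBval] at hmono
  have := mul_le_mul_of_nonneg_left hmono (inv_nonneg.2 hΓ.le)
  refine le_trans this (le_of_eq ?_)
  field_simp

/-- Λ lower bound for `γ > 0`. -/
lemma lambda_lower_bound {γ v ε' : ℝ} (hγ : 0 < γ) (hv : 0 < v) (hε' : 0 ≤ ε')
    (p : ℝ[X]) (hp : p.coeff 0 = 0)
    (hb : ∀ u ∈ Ioi (0:ℝ), (Ioc 0 v).indicator (fun _ => (1:ℝ)) u - 3 * ε' * Real.exp (-u)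
      ≤ p.eval (Real.exp (-u))) :
    v ^ γ / (γ * Real.Gamma γ) - 3 * ε'
      ≤ ∑ k ∈ p.support, p.coeff k * (k:ℝ) ^ (-γ) := by
  have hΓ : 0 < Real.Gamma γ := Real.Gamma_pos_of_pos hγ
  rw [lambda_eq_integral hγ p hp]
  have hintB : IntegrableOn (fun u : ℝ => (Ioc 0 v).indicator (fun u => u ^ (γ - 1)) u
      - 3 * ε' * (u ^ (γ - 1) * Real.exp (-u))) (Ioi 0) :=
    (ind_rpow_integrable hγ hv).sub ((weight_integrable hγ).const_mul _)
  have hmono : ∫ u in Ioi (0:ℝ), ((Ioc 0 v).indicator (fun u => u ^ (γ - 1)) u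
        - 3 * ε' * (u ^ (γ - 1) * Real.exp (-u)))
      ≤ ∫ u in Ioi (0:ℝ), u ^ (γ - 1) * p.eval (Real.exp (-u)) := by
    refine setIntegral_mono_on hintB (poly_weight_integrable hγ p hp)
      measurableSet_Ioi fun u hu => ?_
    have hu0 : (0:ℝ) < u := hu
    have hrp : (0:ℝ) ≤ u ^ (γ - 1) := Real.rpow_nonneg hu0.le _
    have h1 := mul_le_mul_of_nonneg_left (hb u hu) hrp
    refine le_trans ?_ h1
    have h2 : u ^ (γ - 1) * (Ioc 0 v).indicator (fun _ => (1:ℝ)) u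
        = (Ioc 0 v).indicator (fun u => u ^ (γ - 1)) u := by
      by_cases hm : u ∈ Ioc 0 v
      · rw [indicator_of_mem hm, indicator_of_mem hm, mul_one]
      · rw [indicator_of_notMem hm, indicator_of_notMem hm, mul_zero]
    rw [mul_sub, h2]
    have h3 : 3 * ε' * (u ^ (γ - 1) * Real.exp (-u)) = u ^ (γ - 1) * (3 * ε' * Real.exp (-u)) := by
      ring
    rw [h3]
  have hBval : ∫ u in Ioi (0:ℝ), ((Ioc 0 v).indicator (fun u => u ^ (γ - 1)) u
      - 3 * ε' * (u ^ (γ - 1) * Real.exp (-u))) = v ^ γ / γ - 3 * ε' * Real.Gamma γ := by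
    rw [integral_sub (ind_rpow_integrable hγ hv) ((weight_integrable hγ).const_mul _),
      ind_rpow_value hγ hv, MeasureTheory.integral_const_mul, weight_value hγ]
  rw [hBval] at hmono
  have := mul_le_mul_of_nonneg_left hmono (inv_nonneg.2 hΓ.le)
  refine le_trans (le_of_eq ?_) this
  field_simp

/-- Existence of the upper sandwich polynomial. -/
lemma exists_upper_poly {γ : ℝ} (hγ : 0 ≤ γ) {ε : ℝ} (hε : 0 < ε) :
    ∃ p : ℝ[X], p.coeff 0 = 0 ∧
      (∀ y ∈ Icc (0:ℝ) 1, (if Real.exp (-1) ≤ y then (1:ℝ) else 0) ≤ p.eval y) ∧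
      ∑ k ∈ p.support, p.coeff k * (k:ℝ) ^ (-γ) ≤ 1 / Real.Gamma (γ + 1) + ε := by
  rcases eq_or_lt_of_le hγ with h0 | h0
  · -- γ = 0
    obtain ⟨p, hp0, hpf, hp1, _⟩ := upper_construction one_lt_two (show (0:ℝ) < ε/3 by linarith)
    refine ⟨p, hp0, hpf, ?_⟩
    rw [← h0, lambda_eq_eval_one p]
    rw [show (0:ℝ) + 1 = 1 by ring, Real.Gamma_one]
    linarith
  · -- γ > 0
    have hΓ : 0 < Real.Gamma γ := Real.Gamma_pos_of_pos h0
    have hΓ1 : Real.Gamma (γ + 1) = γ * Real.Gamma γ := Real.Gamma_add_one h0.ne'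
    set κ : ℝ := γ * Real.Gamma γ * ε / 2 with hκ_def
    have hκ0 : 0 < κ := by positivity
    have hcont : Tendsto (fun w : ℝ => w ^ γ) (𝓝[>] 1) (𝓝 1) := by
      have h1 := (Real.continuousAt_rpow_const 1 γ (Or.inl one_ne_zero)).tendsto
      rw [Real.one_rpow] at h1
      exact h1.mono_left nhdsWithin_le_nhds
    obtain ⟨w, hwκ, hw1⟩ :=
      ((hcont.eventually_lt_const (show (1:ℝ) < 1 + κ by linarith)).and
        eventually_mem_nhdsWithin).exists
    obtain ⟨p, hp0, hpf, _, hpb⟩ := upper_construction hw1 (show (0:ℝ) < ε/6 by linarith)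
    refine ⟨p, hp0, hpf, ?_⟩
    have hb := lambda_upper_bound h0 (lt_trans one_pos hw1) (by linarith : (0:ℝ) ≤ ε/6) p hp0 hpb
    refine le_trans hb ?_
    rw [hΓ1]
    have hκval : κ / (γ * Real.Gamma γ) = ε / 2 := by
      rw [hκ_def]
      field_simp
    have h2 : w ^ γ / (γ * Real.Gamma γ) ≤ (1 + κ) / (γ * Real.Gamma γ) := by
      rw [div_eq_mul_inv, div_eq_mul_inv]
      exact mul_le_mul_of_nonneg_right hwκ.le (inv_nonneg.2 (mul_pos h0 hΓ).le)
    have h3 : (1 + κ) / (γ * Real.Gamma γ) = 1 / (γ * Real.Gamma γ) + ε / 2 := by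
      rw [add_div, hκval]
    linarith

/-- Existence of the lower sandwich polynomial. -/
lemma exists_lower_poly {γ : ℝ} (hγ : 0 ≤ γ) {ε : ℝ} (hε : 0 < ε) :
    ∃ p : ℝ[X], p.coeff 0 = 0 ∧
      (∀ y ∈ Icc (0:ℝ) 1, p.eval y ≤ (if Real.exp (-1) ≤ y then (1:ℝ) else 0)) ∧
      1 / Real.Gamma (γ + 1) - ε ≤ ∑ k ∈ p.support, p.coeff k * (k:ℝ) ^ (-γ) := by
  rcases eq_or_lt_of_le hγ with h0 | h0
  · -- γ = 0
    obtain ⟨p, hp0, hpf, hp1, _⟩ := lower_construction (show (0:ℝ) < 1/2 by norm_num)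
      (show (1:ℝ)/2 < 1 by norm_num) (show (0:ℝ) < ε/3 by linarith)
    refine ⟨p, hp0, hpf, ?_⟩
    rw [← h0, lambda_eq_eval_one p, show (0:ℝ) + 1 = 1 by ring, Real.Gamma_one]
    linarith
  · -- γ > 0
    have hΓ : 0 < Real.Gamma γ := Real.Gamma_pos_of_pos h0
    have hΓ1 : Real.Gamma (γ + 1) = γ * Real.Gamma γ := Real.Gamma_add_one h0.ne'
    set κ : ℝ := γ * Real.Gamma γ * ε / 2 with hκ_def
    have hκ0 : 0 < κ := by positivity
    have hcont : Tendsto (fun v : ℝ => v ^ γ) (𝓝[<] 1) (𝓝 1) := by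
      have h1 := (Real.continuousAt_rpow_const 1 γ (Or.inl one_ne_zero)).tendsto
      rw [Real.one_rpow] at h1
      exact h1.mono_left nhdsWithin_le_nhds
    have hIoo : Ioo (0:ℝ) 1 ∈ 𝓝[<] (1:ℝ) := by
      have h2 : Ioi (0:ℝ) ∩ Iio 1 = Ioo 0 1 := Ioi_inter_Iio
      rw [← h2]
      exact inter_mem (mem_nhdsWithin_of_mem_nhds (Ioi_mem_nhds one_pos)) self_mem_nhdsWithin
    have hev2 : ∀ᶠ v : ℝ in 𝓝[<] (1:ℝ), v ∈ Ioo (0:ℝ) 1 := by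
      filter_upwards [hIoo] with v hv
      exact hv
    obtain ⟨v, hvκ, hv01⟩ :=
      ((hcont.eventually_const_lt (show 1 - κ < (1:ℝ) by linarith)).and hev2).exists
    obtain ⟨p, hp0, hpf, _, hpb⟩ := lower_construction hv01.1 hv01.2
      (show (0:ℝ) < ε/6 by linarith)
    refine ⟨p, hp0, hpf, ?_⟩
    have hb := lambda_lower_bound h0 hv01.1 (by linarith : (0:ℝ) ≤ ε/6) p hp0 hpb
    refine le_trans ?_ hb
    rw [hΓ1]
    have hκval : κ / (γ * Real.Gamma γ) = ε / 2 := by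
      rw [hκ_def]
      field_simp
    have h2 : (1 - κ) / (γ * Real.Gamma γ) ≤ v ^ γ / (γ * Real.Gamma γ) := by
      rw [div_eq_mul_inv, div_eq_mul_inv]
      exact mul_le_mul_of_nonneg_right hvκ.le (inv_nonneg.2 (mul_pos h0 hΓ).le)
    have h3 : (1 - κ) / (γ * Real.Gamma γ) = 1 / (γ * Real.Gamma γ) - ε / 2 := by
      rw [sub_div, hκval]
    linarith

lemma L_mono (ν : Measure ℝ) (hν : ν (Set.Iio 0) = 0) {t₁ t₂ : ℝ} (h : t₁ ≤ t₂) :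
    L ν t₂ ≤ L ν t₁ := by
  refine lintegral_mono_ae ((ae_nonneg ν hν).mono fun x hx => ?_)
  exact ENNReal.ofReal_le_ofReal (Real.exp_le_exp.2 (by nlinarith))

lemma Icc_lt_top' (ν : Measure ℝ) {t a : ℝ} (ht : 0 < t) (hL : L ν t ≠ ⊤) :
    ν (Icc 0 a) < ⊤ := by
  have key : ν (Icc 0 a) * ENNReal.ofReal (Real.exp (-t * a)) ≤ L ν t := by
    have h1 : ∫⁻ _ in Icc 0 a, ENNReal.ofReal (Real.exp (-t * a)) ∂ν
        = ν (Icc 0 a) * ENNReal.ofReal (Real.exp (-t * a)) := by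
      rw [setLIntegral_const, mul_comm]
    rw [← h1]
    refine le_trans (setLIntegral_mono (by fun_prop) fun x hx => ?_) (setLIntegral_le_lintegral _ _)
    exact ENNReal.ofReal_le_ofReal (Real.exp_le_exp.2 (by nlinarith [hx.1, hx.2]))
  by_contra hcon
  rw [not_lt, top_le_iff] at hcon
  rw [hcon, ENNReal.top_mul (by simp [Real.exp_pos])] at key
  exact hL (top_le_iff.1 key)

lemma indicator_eq_ite (ν : Measure ℝ) {t x : ℝ} (ht : 0 < t) (hx : 0 ≤ x) :
    (Icc (0:ℝ) (1/t)).indicator (fun _ => (1:ℝ)) x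
      = (if Real.exp (-1) ≤ Real.exp (-t * x) then (1:ℝ) else 0) := by
  by_cases hx2 : x ≤ 1/t
  · rw [indicator_of_mem (Set.mem_Icc.2 ⟨hx, hx2⟩), if_pos]
    refine Real.exp_le_exp.2 ?_
    have := (le_div_iff₀ ht).1 hx2
    nlinarith
  · rw [indicator_of_notMem (fun hmem => hx2 (Set.mem_Icc.1 hmem).2), if_neg]
    push_neg at hx2
    refine not_le.2 (Real.exp_lt_exp.2 ?_)
    have := (div_lt_iff₀ ht).1 hx2
    nlinarith

lemma indicator_integrable (ν : Measure ℝ) {t : ℝ} (hIccfin : ν (Icc 0 (1/t)) ≠ ⊤) :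
    Integrable ((Icc (0:ℝ) (1/t)).indicator (fun _ => (1:ℝ))) ν := by
  rw [integrable_indicator_iff measurableSet_Icc]
  exact integrableOn_const hIccfin

lemma exp_mem_Icc {t x : ℝ} (ht : 0 < t) (hx : 0 ≤ x) :
    Real.exp (-t * x) ∈ Icc (0:ℝ) 1 := by
  constructor
  · exact (Real.exp_pos _).le
  · rw [show (1:ℝ) = Real.exp 0 by rw [Real.exp_zero]]
    exact Real.exp_le_exp.2 (by nlinarith)

lemma sandwich_upper (ν : Measure ℝ) (hν : ν (Set.Iio 0) = 0) {t : ℝ} (ht : 0 < t)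
    (hLfin : ∀ u : ℝ, 0 < u → L ν u ≠ ⊤) (hIccfin : ν (Icc 0 (1/t)) ≠ ⊤)
    (p : ℝ[X]) (hp0 : p.coeff 0 = 0)
    (hpf : ∀ y ∈ Icc (0:ℝ) 1, (if Real.exp (-1) ≤ y then (1:ℝ) else 0) ≤ p.eval y) :
    (ν (Icc 0 (1/t))).toReal ≤ ∫ x, p.eval (Real.exp (-t * x)) ∂ν := by
  have hind : ∫ x, (Icc (0:ℝ) (1/t)).indicator (fun _ => (1:ℝ)) x ∂ν
      = (ν (Icc 0 (1/t))).toReal := by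
    rw [MeasureTheory.integral_indicator_const (1:ℝ) measurableSet_Icc, smul_eq_mul, mul_one, measureReal_def]
  rw [← hind]
  refine integral_mono_ae (indicator_integrable ν hIccfin)
    (poly_integrable ν ht hLfin p hp0) ?_
  filter_upwards [ae_nonneg ν hν] with x hx
  rw [indicator_eq_ite ν ht hx]
  exact hpf _ (exp_mem_Icc ht hx)

lemma sandwich_lower (ν : Measure ℝ) (hν : ν (Set.Iio 0) = 0) {t : ℝ} (ht : 0 < t)
    (hLfin : ∀ u : ℝ, 0 < u → L ν u ≠ ⊤) (hIccfin : ν (Icc 0 (1/t)) ≠ ⊤)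
    (p : ℝ[X]) (hp0 : p.coeff 0 = 0)
    (hpf : ∀ y ∈ Icc (0:ℝ) 1, p.eval y ≤ (if Real.exp (-1) ≤ y then (1:ℝ) else 0)) :
    ∫ x, p.eval (Real.exp (-t * x)) ∂ν ≤ (ν (Icc 0 (1/t))).toReal := by
  have hind : ∫ x, (Icc (0:ℝ) (1/t)).indicator (fun _ => (1:ℝ)) x ∂ν
      = (ν (Icc 0 (1/t))).toReal := by
    rw [MeasureTheory.integral_indicator_const (1:ℝ) measurableSet_Icc, smul_eq_mul, mul_one, measureReal_def]
  rw [← hind]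
  refine integral_mono_ae (poly_integrable ν ht hLfin p hp0)
    (indicator_integrable ν hIccfin) ?_
  filter_upwards [ae_nonneg ν hν] with x hx
  rw [indicator_eq_ite ν ht hx]
  exact hpf _ (exp_mem_Icc ht hx)

/-- The Tauberian direction. -/
lemma tauberian (ν : Measure ℝ) [SigmaFinite ν] (hν : ν (Set.Iio 0) = 0) {γ C : ℝ}
    (hγ : 0 ≤ γ) (hC : 0 ≤ C)
    (hS : Tendsto (fun t : ℝ => ENNReal.ofReal (t ^ γ) * L ν t) (𝓝[>] 0)
      (𝓝 (ENNReal.ofReal C))) :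
    Tendsto (fun a : ℝ => ν (Set.Icc 0 a) / ENNReal.ofReal (a ^ γ)) atTop
      (𝓝 (ENNReal.ofReal (C / Real.Gamma (γ + 1)))) := by
  have hΓ1 : 0 < Real.Gamma (γ + 1) := Real.Gamma_pos_of_pos (by linarith)
  set ℓ : ℝ := C / Real.Gamma (γ + 1) with hℓ_def
  have hℓC : C * (1 / Real.Gamma (γ + 1)) = ℓ := by rw [hℓ_def, mul_one_div]
  -- L is finite
  have hLfin : ∀ u : ℝ, 0 < u → L ν u ≠ ⊤ := by
    intro u hu
    have h1 : ∀ᶠ t : ℝ in 𝓝[>] 0, ENNReal.ofReal (t ^ γ) * L ν t < ENNReal.ofReal C + 1 :=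
      hS.eventually_lt_const (ENNReal.lt_add_right ENNReal.ofReal_ne_top one_ne_zero)
    have h2 : ∀ᶠ t : ℝ in 𝓝[>] 0, t ∈ Ioo (0:ℝ) u := by
      have h3 : Ioi (0:ℝ) ∩ Iio u = Ioo 0 u := Ioi_inter_Iio
      have h4 : Ioo (0:ℝ) u ∈ 𝓝[>] (0:ℝ) := by
        rw [← h3]
        exact inter_mem self_mem_nhdsWithin (mem_nhdsWithin_of_mem_nhds (Iio_mem_nhds hu))
      filter_upwards [h4] with x hx
      exact hx
    obtain ⟨t₀, ht₁, ht₂⟩ := (h1.and h2).exists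
    have ht₀fin : L ν t₀ ≠ ⊤ := by
      intro hcon
      rw [hcon, ENNReal.mul_top (by
        simp only [ne_eq, ENNReal.ofReal_eq_zero, not_le]
        exact Real.rpow_pos_of_pos ht₂.1 γ)] at ht₁
      exact not_top_lt ht₁
    intro hcon
    apply ht₀fin
    have hmon := L_mono ν hν ht₂.2.le
    rw [hcon] at hmon
    exact top_le_iff.1 hmon
  have hIccfin : ∀ a : ℝ, ν (Icc 0 a) ≠ ⊤ :=
    fun a => (Icc_lt_top' ν one_pos (hLfin 1 one_pos)).ne
  -- the key real limit
  have key : Tendsto (fun t : ℝ => t ^ γ * (ν (Icc 0 (1/t))).toReal) (𝓝[>] 0) (𝓝 ℓ) := by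
    rw [tendsto_order]
    constructor
    · -- from below
      intro b hb
      set ε : ℝ := (ℓ - b) / (2 * (C + 1)) with hε_def
      have hε0 : 0 < ε := div_pos (by linarith) (by linarith)
      obtain ⟨p, hp0, hpf, hpΛ⟩ := exists_lower_poly hγ hε0
      have hCε : C * ε ≤ (ℓ - b) / 2 := by
        rw [hε_def, ← mul_div_assoc, div_le_div_iff₀ (by linarith) (by norm_num : (0:ℝ) < 2)]
        nlinarith
      have hΛb : b < C * ∑ k ∈ p.support, p.coeff k * (k:ℝ) ^ (-γ) := by
        have h1 := mul_le_mul_of_nonneg_left hpΛ hC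
        rw [mul_sub, hℓC] at h1
        linarith
      have hev := (poly_limit ν hC hS hLfin p hp0).eventually_const_lt hΛb
      filter_upwards [hev, eventually_mem_nhdsWithin] with t h1 (h2 : t ∈ Ioi (0:ℝ))
      have h3 := sandwich_lower ν hν h2 hLfin (hIccfin _) p hp0 hpf
      have h4 := mul_le_mul_of_nonneg_left h3 (Real.rpow_nonneg (le_of_lt h2) γ)
      exact lt_of_lt_of_le h1 h4
    · -- from above
      intro b hb
      set ε : ℝ := (b - ℓ) / (2 * (C + 1)) with hε_def
      have hε0 : 0 < ε := div_pos (by linarith) (by linarith)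
      obtain ⟨p, hp0, hpf, hpΛ⟩ := exists_upper_poly hγ hε0
      have hCε : C * ε ≤ (b - ℓ) / 2 := by
        rw [hε_def, ← mul_div_assoc, div_le_div_iff₀ (by linarith) (by norm_num : (0:ℝ) < 2)]
        nlinarith
      have hΛb : C * ∑ k ∈ p.support, p.coeff k * (k:ℝ) ^ (-γ) < b := by
        have h1 := mul_le_mul_of_nonneg_left hpΛ hC
        rw [mul_add, hℓC] at h1
        linarith
      have hev := (poly_limit ν hC hS hLfin p hp0).eventually_lt_const hΛb
      filter_upwards [hev, eventually_mem_nhdsWithin] with t h1 (h2 : t ∈ Ioi (0:ℝ))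
      have h3 := sandwich_upper ν hν h2 hLfin (hIccfin _) p hp0 hpf
      have h4 := mul_le_mul_of_nonneg_left h3 (Real.rpow_nonneg (le_of_lt h2) γ)
      exact lt_of_le_of_lt h4 h1
  -- transfer to `atTop`
  have hmap : Tendsto (fun a : ℝ => 1 / a) atTop (𝓝[>] (0:ℝ)) := by
    apply tendsto_nhdsWithin_of_tendsto_nhds_of_eventually_within
    · simpa only [one_div] using tendsto_inv_atTop_zero
    · filter_upwards [eventually_gt_atTop (0:ℝ)] with a ha
      exact one_div_pos.2 ha
  have key2 := key.comp hmap
  have key3 : Tendsto (fun a : ℝ => (ν (Icc 0 a)).toReal / a ^ γ) atTop (𝓝 ℓ) := by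
    refine key2.congr' ?_
    filter_upwards [eventually_gt_atTop (0:ℝ)] with a ha
    show (1/a) ^ γ * (ν (Icc 0 (1/(1/a)))).toReal = _
    rw [one_div_one_div, one_div, Real.inv_rpow ha.le, inv_mul_eq_div]
  refine (ENNReal.tendsto_ofReal key3).congr' ?_
  filter_upwards [eventually_gt_atTop (0:ℝ)] with a ha
  rw [ENNReal.ofReal_div_of_pos (Real.rpow_pos_of_pos ha γ), ENNReal.ofReal_toReal (hIccfin a)]

end Tb


/-- The integral Abelian–Tauberian theorem: for a σ-finite positive Borel measure `ν` on
`[0,∞)` and `γ ≥ 0`, one has `lim_{t→0⁺} t^γ ∫_0^∞ e^{−tλ} dν(λ) = C` if and only if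
`lim_{a→∞} ν([0,a])/a^γ = C/Γ(γ+1)`. -/
theorem abelian_tauberian (ν : Measure ℝ) [SigmaFinite ν]
    (hν : ν (Set.Iio 0) = 0) (γ C : ℝ) (hγ : 0 ≤ γ) (hC : 0 ≤ C) :
    Tendsto
        (fun t : ℝ => ENNReal.ofReal (t ^ γ) * ∫⁻ x, ENNReal.ofReal (Real.exp (-t * x)) ∂ν)
        (𝓝[>] 0) (𝓝 (ENNReal.ofReal C)) ↔
      Tendsto (fun a : ℝ => ν (Set.Icc 0 a) / ENNReal.ofReal (a ^ γ)) atTop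
        (𝓝 (ENNReal.ofReal (C / Real.Gamma (γ + 1)))) := by
  constructor
  · intro h
    exact Tb.tauberian ν hν hγ hC h
  · intro h
    exact KaramataAux.abelian ν hν hγ hC h
end

section
/- Suppose u ∈ L²(ℝ^d) and a constant J ≥ 0 satisfy lim_{R→∞} (2π²/R) ∫_{B_R} |ξ|² |û(ξ)|² dξ = J. Then lim_{R→∞} 2π² R ∫_{|ξ| > R} |û(ξ)|² dξ = J. -/
open MeasureTheory Filter Topology FourierTransform Metric
open scoped ENNReal

open Set

open MeasureTheory Filter Topology Set
open scoped ENNReal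

set_option maxHeartbeats 1000000 in
private lemma tail_lemma (ν : Measure ℝ) (c : ℝ) (hc : 0 ≤ c)
    (hfin : ∀ R : ℝ, (∫⁻ r in Iio R, ENNReal.ofReal (r ^ 2) ∂ν) ≠ ⊤)
    (hφ : Tendsto (fun R : ℝ =>
        (∫⁻ r in Iio R, ENNReal.ofReal (r ^ 2) ∂ν).toReal / R) atTop (𝓝 c)) :
    Tendsto (fun R : ℝ => R * (ν (Ioi R)).toReal) atTop (𝓝 c) := by
  classical
  set φ : ℝ → ℝ := fun R => (∫⁻ r in Iio R, ENNReal.ofReal (r ^ 2) ∂ν).toReal with hφdef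
  set ψ : ℝ → ℝ := fun R => (∫⁻ r in Iic R, ENNReal.ofReal (r ^ 2) ∂ν).toReal with hψdef
  have hΨfin : ∀ R : ℝ, (∫⁻ r in Iic R, ENNReal.ofReal (r ^ 2) ∂ν) ≠ ⊤ := fun R =>
    ne_top_of_le_ne_top (hfin (R + 1)) (lintegral_mono_set (Iic_subset_Iio.2 (lt_add_one R)))
  have hφψ : ∀ R, φ R ≤ ψ R := fun R =>
    ENNReal.toReal_mono (hΨfin R) (lintegral_mono_set Iio_subset_Iic_self)
  have hψφ : ∀ a b : ℝ, a < b → ψ a ≤ φ b := fun a b hab =>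
    ENNReal.toReal_mono (hfin b) (lintegral_mono_set (Iic_subset_Iio.2 hab))
  -- annulus estimates
  have hann : ∀ a b : ℝ, 0 < a → a ≤ b → ν (Ioc a b) ≠ ⊤ ∧
      a ^ 2 * (ν (Ioc a b)).toReal ≤ ψ b - ψ a ∧
      ψ b - ψ a ≤ b ^ 2 * (ν (Ioc a b)).toReal := by
    intro a b ha hab
    have hIoc : (∫⁻ r in Ioc a b, ENNReal.ofReal (r ^ 2) ∂ν) ≤
        ∫⁻ r in Iic b, ENNReal.ofReal (r ^ 2) ∂ν :=
      lintegral_mono_set Ioc_subset_Iic_self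
    have hsplit : (∫⁻ r in Iic b, ENNReal.ofReal (r ^ 2) ∂ν) =
        (∫⁻ r in Iic a, ENNReal.ofReal (r ^ 2) ∂ν) +
        ∫⁻ r in Ioc a b, ENNReal.ofReal (r ^ 2) ∂ν := by
      rw [← Iic_union_Ioc_eq_Iic hab, lintegral_union measurableSet_Ioc (Iic_disjoint_Ioc le_rfl)]
    have hlow : ENNReal.ofReal (a ^ 2) * ν (Ioc a b) ≤
        ∫⁻ r in Ioc a b, ENNReal.ofReal (r ^ 2) ∂ν := by
      rw [← setLIntegral_const]
      exact setLIntegral_mono ((measurable_id.pow_const 2).ennreal_ofReal)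
        (fun x hx => ENNReal.ofReal_le_ofReal (pow_le_pow_left₀ ha.le hx.1.le 2))
    have hhigh : (∫⁻ r in Ioc a b, ENNReal.ofReal (r ^ 2) ∂ν) ≤
        ENNReal.ofReal (b ^ 2) * ν (Ioc a b) := by
      rw [← setLIntegral_const]
      exact setLIntegral_mono measurable_const
        (fun x hx => ENNReal.ofReal_le_ofReal (pow_le_pow_left₀ (ha.le.trans hx.1.le) hx.2 2))
    have hm : ν (Ioc a b) ≠ ⊤ := by
      intro htop
      have h1 : ENNReal.ofReal (a ^ 2) * ν (Ioc a b) = ⊤ := by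
        rw [htop, ENNReal.mul_top]
        exact (ENNReal.ofReal_pos.2 (pow_pos ha 2)).ne'
      exact hΨfin b (top_le_iff.1 (h1 ▸ (hlow.trans hIoc)))
    have hIocfin : (∫⁻ r in Ioc a b, ENNReal.ofReal (r ^ 2) ∂ν) ≠ ⊤ :=
      ne_top_of_le_ne_top (hΨfin b) hIoc
    have hψeq : ψ b = ψ a + (∫⁻ r in Ioc a b, ENNReal.ofReal (r ^ 2) ∂ν).toReal := by
      rw [hψdef]
      simp only
      rw [hsplit, ENNReal.toReal_add (hΨfin a) hIocfin]
    have h2 : a ^ 2 * (ν (Ioc a b)).toReal ≤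
        (∫⁻ r in Ioc a b, ENNReal.ofReal (r ^ 2) ∂ν).toReal := by
      have := ENNReal.toReal_mono hIocfin hlow
      rwa [ENNReal.toReal_mul, ENNReal.toReal_ofReal (by positivity)] at this
    have h3 : (∫⁻ r in Ioc a b, ENNReal.ofReal (r ^ 2) ∂ν).toReal ≤
        b ^ 2 * (ν (Ioc a b)).toReal := by
      have := ENNReal.toReal_mono (ENNReal.mul_ne_top ENNReal.ofReal_ne_top hm) hhigh
      rwa [ENNReal.toReal_mul, ENNReal.toReal_ofReal (by positivity)] at this
    exact ⟨hm, by linarith, by linarith⟩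
  -- main estimate
  rw [Metric.tendsto_atTop]
  intro ε hε
  obtain ⟨η, hη0, hη1, hηε⟩ : ∃ η : ℝ, 0 < η ∧ η ≤ 1 ∧ η * (4 * (c + 1)) ≤ ε := by
    refine ⟨min (ε / (4 * (c + 1))) 1, by positivity, min_le_right _ _, ?_⟩
    have h4 : (0:ℝ) < 4 * (c + 1) := by linarith
    calc min (ε / (4 * (c + 1))) 1 * (4 * (c + 1)) ≤ ε / (4 * (c + 1)) * (4 * (c + 1)) :=
          mul_le_mul_of_nonneg_right (min_le_left _ _) h4.le
      _ = ε := div_mul_cancel₀ ε h4.ne'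
  obtain ⟨ε₁, hε₁0, hε₁1, hε₁η⟩ : ∃ e : ℝ, 0 < e ∧ e ≤ 1 ∧ e * (100 * (c + 2)) ≤ η * ε := by
    refine ⟨min (η * ε / (100 * (c + 2))) 1, by positivity, min_le_right _ _, ?_⟩
    have h4 : (0:ℝ) < 100 * (c + 2) := by linarith
    calc min (η * ε / (100 * (c + 2))) 1 * (100 * (c + 2)) ≤
          η * ε / (100 * (c + 2)) * (100 * (c + 2)) :=
          mul_le_mul_of_nonneg_right (min_le_left _ _) h4.le
      _ = η * ε := div_mul_cancel₀ _ h4.ne'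
  obtain ⟨N, hN⟩ := Metric.tendsto_atTop.1 hφ ε₁ hε₁0
  set R₀ : ℝ := max N 1 with hR₀def
  have hφbound : ∀ r : ℝ, R₀ ≤ r → |φ r - c * r| ≤ ε₁ * r := by
    intro r hr
    have hr1 : (1:ℝ) ≤ r := le_trans (le_max_right _ _) hr
    have hr0 : 0 < r := by linarith
    have h1 := (hN r (le_trans (le_max_left _ _) hr)).le
    rw [Real.dist_eq] at h1
    have h2 : φ r - c * r = (φ r / r - c) * r := by field_simp
    rw [h2, abs_mul, abs_of_pos hr0]
    exact mul_le_mul_of_nonneg_right h1 hr0.le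
  have hR₀1 : (1:ℝ) ≤ R₀ := le_max_right _ _
  have hψub : ∀ r : ℝ, R₀ ≤ r → ψ r ≤ (c + ε₁) * (1 + ε₁) * r := by
    intro r hr
    have hr0 : 0 < r := lt_of_lt_of_le one_pos (hR₀1.trans hr)
    have h1 : ψ r ≤ φ (r * (1 + ε₁)) := hψφ _ _ (by nlinarith)
    have h2 := abs_le.1 (hφbound (r * (1 + ε₁)) (by nlinarith))
    nlinarith [h2.2]
  have hψlb : ∀ r : ℝ, R₀ ≤ r → (c - ε₁) * r ≤ ψ r := by
    intro r hr
    have h2 := abs_le.1 (hφbound r hr)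
    have h3 := hφψ r
    nlinarith [h2.1]
  set l : ℝ := 1 + η with hldef
  have hl1 : 1 < l := by simp only [hldef]; linarith
  have hl0 : 0 < l := lt_trans one_pos hl1
  set D : ℝ := (c + ε₁) * (1 + ε₁) * l - (c - ε₁) with hDdef
  set E : ℝ := (c - ε₁) * l - (c + ε₁) * (1 + ε₁) with hEdef
  have hD0 : 0 ≤ D := by
    rw [hDdef, hldef]
    nlinarith [mul_nonneg (mul_nonneg (by linarith : (0:ℝ) ≤ c + ε₁) (by linarith : (0:ℝ) ≤ 1 + ε₁)) hη0.le, mul_nonneg (by linarith : (0:ℝ) ≤ c + ε₁) hε₁0.le]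
  refine ⟨R₀, ?_⟩
  intro R hR
  have hR1 : (1:ℝ) ≤ R := hR₀1.trans hR
  have hR0 : (0:ℝ) < R := by linarith
  have ha0 : ∀ k : ℕ, 0 < l ^ k * R := fun k => mul_pos (pow_pos hl0 k) hR0
  have hale : ∀ k : ℕ, l ^ k * R ≤ l ^ (k + 1) * R := fun k =>
    mul_le_mul_of_nonneg_right (pow_le_pow_right₀ hl1.le (Nat.le_succ k)) hR0.le
  have haR₀ : ∀ k : ℕ, R₀ ≤ l ^ k * R := fun k =>
    le_trans hR (le_mul_of_one_le_left hR0.le (one_le_pow₀ hl1.le))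
  -- per-annulus bounds
  have hmfin : ∀ k : ℕ, ν (Ioc (l ^ k * R) (l ^ (k + 1) * R)) ≠ ⊤ :=
    fun k => (hann _ _ (ha0 k) (hale k)).1
  have hup : ∀ k : ℕ, (ν (Ioc (l ^ k * R) (l ^ (k + 1) * R))).toReal ≤ D / R * l⁻¹ ^ k := by
    intro k
    obtain ⟨-, h1, -⟩ := hann _ _ (ha0 k) (hale k)
    have hub := hψub _ (haR₀ (k + 1))
    have hlb := hψlb _ (haR₀ k)
    have hsucc : l ^ (k + 1) * R = l * (l ^ k * R) := by ring
    have hexp : (c + ε₁) * (1 + ε₁) * (l ^ (k + 1) * R) =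
        (c + ε₁) * (1 + ε₁) * l * (l ^ k * R) := by rw [pow_succ]; ring
    have hDa2 : D * (l ^ k * R) =
        (c + ε₁) * (1 + ε₁) * l * (l ^ k * R) - (c - ε₁) * (l ^ k * R) := by
      rw [hDdef]; ring
    have hDa : ψ (l ^ (k + 1) * R) - ψ (l ^ k * R) ≤ D * (l ^ k * R) := by
      linarith [hub, hlb, hexp, hDa2]
    have hkey : l ^ k * R * ((ν (Ioc (l ^ k * R) (l ^ (k + 1) * R))).toReal * (l ^ k * R)) ≤
        l ^ k * R * D := by linarith [h1, hDa]
    have h4 : (ν (Ioc (l ^ k * R) (l ^ (k + 1) * R))).toReal * (l ^ k * R) ≤ D :=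
      le_of_mul_le_mul_left hkey (ha0 k)
    have hval : D / (l ^ k * R) = D / R * l⁻¹ ^ k := by
      rw [inv_pow, mul_comm (l ^ k) R, ← div_div, div_eq_mul_inv]
    rw [← hval, le_div_iff₀ (ha0 k)]
    exact h4
  have hdown : ∀ k : ℕ, E / (l ^ 2 * R) * l⁻¹ ^ k ≤
      (ν (Ioc (l ^ k * R) (l ^ (k + 1) * R))).toReal := by
    intro k
    obtain ⟨-, -, h1⟩ := hann _ _ (ha0 k) (hale k)
    have hub := hψub _ (haR₀ k)
    have hlb := hψlb _ (haR₀ (k + 1))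
    have hsucc : l ^ (k + 1) * R = l * (l ^ k * R) := by ring
    have hexp : (c - ε₁) * (l ^ (k + 1) * R) = (c - ε₁) * l * (l ^ k * R) := by
      rw [pow_succ]; ring
    have hEa2 : E * (l ^ k * R) =
        (c - ε₁) * l * (l ^ k * R) - (c + ε₁) * (1 + ε₁) * (l ^ k * R) := by
      rw [hEdef]; ring
    have hEa : E * (l ^ k * R) ≤ ψ (l ^ (k + 1) * R) - ψ (l ^ k * R) := by
      linarith [hub, hlb, hexp, hEa2]
    have hsq : (l ^ (k + 1) * R) ^ 2 *  (ν (Ioc (l ^ k * R) (l ^ (k + 1) * R))).toReal =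
        (ν (Ioc (l ^ k * R) (l ^ (k + 1) * R))).toReal * (l ^ 2 * (l ^ k * R)) * (l ^ k * R) := by
      rw [pow_succ]; ring
    have hkey : l ^ k * R * E ≤
        l ^ k * R * ((ν (Ioc (l ^ k * R) (l ^ (k + 1) * R))).toReal * (l ^ 2 * (l ^ k * R))) := by
      linarith [h1, hEa, hsq]
    have h4 : E ≤ (ν (Ioc (l ^ k * R) (l ^ (k + 1) * R))).toReal * (l ^ 2 * (l ^ k * R)) :=
      le_of_mul_le_mul_left hkey (ha0 k)
    have hval : E / (l ^ 2 * (l ^ k * R)) = E / (l ^ 2 * R) * l⁻¹ ^ k := by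
      rw [inv_pow, show l ^ 2 * (l ^ k * R) = l ^ 2 * R * l ^ k from by ring,
        ← div_div, div_eq_mul_inv]
    rw [← hval, div_le_iff₀ (by positivity)]
    exact h4
  -- covering
  have hcover : Ioi R = ⋃ k : ℕ, Ioc (l ^ k * R) (l ^ (k + 1) * R) := by
    ext x
    simp only [mem_Ioi, mem_iUnion, mem_Ioc]
    constructor
    · intro hx
      have hex : ∃ n : ℕ, x ≤ l ^ n * R := by
        obtain ⟨n, hn⟩ :=
          ((tendsto_pow_atTop_atTop_of_one_lt hl1).eventually_ge_atTop (x / R)).exists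
        exact ⟨n, (div_le_iff₀ hR0).1 hn⟩
      have hn : x ≤ l ^ Nat.find hex * R := Nat.find_spec hex
      have hn0 : Nat.find hex ≠ 0 := by
        intro h0
        rw [h0, pow_zero, one_mul] at hn
        linarith
      obtain ⟨k, hk⟩ := Nat.exists_eq_succ_of_ne_zero hn0
      rw [hk] at hn
      refine ⟨k, ?_, hn⟩
      have := Nat.find_min hex (m := k) (by omega)
      push_neg at this
      exact this
    · rintro ⟨k, h1, -⟩
      exact lt_of_le_of_lt (le_mul_of_one_le_left hR0.le (one_le_pow₀ hl1.le)) h1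
  have hdisj : Pairwise (Function.onFun Disjoint fun k : ℕ =>
      Ioc (l ^ k * R) (l ^ (k + 1) * R)) := by
    have key : ∀ i j : ℕ, i < j →
        Disjoint (Ioc (l ^ i * R) (l ^ (i + 1) * R)) (Ioc (l ^ j * R) (l ^ (j + 1) * R)) := by
      intro i j hij
      apply Set.Ioc_disjoint_Ioc.2
      have h1 : l ^ (i + 1) * R ≤ l ^ j * R :=
        mul_le_mul_of_nonneg_right (pow_le_pow_right₀ hl1.le hij) hR0.le
      exact le_trans (min_le_left _ _) (le_trans h1 (le_max_right _ _))
    intro i j hij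
    rcases Ne.lt_or_gt hij with h | h
    · exact key i j h
    · exact (key j i h).symm
  have hτ : ν (Ioi R) = ∑' k : ℕ, ν (Ioc (l ^ k * R) (l ^ (k + 1) * R)) := by
    rw [hcover]
    exact measure_iUnion hdisj fun k => measurableSet_Ioc
  have hgeo_sum : Summable (fun k : ℕ => l⁻¹ ^ k) :=
    summable_geometric_of_lt_one (by positivity) (inv_lt_one_of_one_lt₀ hl1)
  have hτfin : ν (Ioi R) ≠ ⊤ := by
    rw [hτ]
    have hle : ∀ k : ℕ, ν (Ioc (l ^ k * R) (l ^ (k + 1) * R)) ≤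
        ENNReal.ofReal (D / R * l⁻¹ ^ k) := by
      intro k
      rw [← ENNReal.ofReal_toReal (hmfin k)]
      exact ENNReal.ofReal_le_ofReal (hup k)
    refine ne_top_of_le_ne_top (ENNReal.ofReal_ne_top
      (r := ∑' k : ℕ, D / R * l⁻¹ ^ k)) ?_
    calc (∑' k : ℕ, ν (Ioc (l ^ k * R) (l ^ (k + 1) * R))) ≤
          ∑' k : ℕ, ENNReal.ofReal (D / R * l⁻¹ ^ k) := ENNReal.tsum_le_tsum hle
      _ = ENNReal.ofReal (∑' k : ℕ, D / R * l⁻¹ ^ k) :=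
          (ENNReal.ofReal_tsum_of_nonneg (fun k => by positivity) (hgeo_sum.mul_left _)).symm
  have hsummm : Summable (fun k : ℕ => (ν (Ioc (l ^ k * R) (l ^ (k + 1) * R))).toReal) := by
    refine ENNReal.summable_toReal ?_
    rw [← hτ]; exact hτfin
  have htoReal : (ν (Ioi R)).toReal =
      ∑' k : ℕ, (ν (Ioc (l ^ k * R) (l ^ (k + 1) * R))).toReal := by
    rw [hτ, ENNReal.tsum_toReal_eq hmfin]
  have hgeo_val : (∑' k : ℕ, l⁻¹ ^ k) = (1 - l⁻¹)⁻¹ :=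
    tsum_geometric_of_lt_one (by positivity) (inv_lt_one_of_one_lt₀ hl1)
  have hub2 : (ν (Ioi R)).toReal ≤ D / R * (1 - l⁻¹)⁻¹ := by
    rw [htoReal]
    calc (∑' k : ℕ, (ν (Ioc (l ^ k * R) (l ^ (k + 1) * R))).toReal) ≤
          ∑' k : ℕ, D / R * l⁻¹ ^ k := Summable.tsum_le_tsum hup hsummm (hgeo_sum.mul_left _)
      _ = D / R * (1 - l⁻¹)⁻¹ := by rw [tsum_mul_left, hgeo_val]
  have hlb2 : E / (l ^ 2 * R) * (1 - l⁻¹)⁻¹ ≤ (ν (Ioi R)).toReal := by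
    rw [htoReal]
    calc E / (l ^ 2 * R) * (1 - l⁻¹)⁻¹ = ∑' k : ℕ, E / (l ^ 2 * R) * l⁻¹ ^ k := by
          rw [tsum_mul_left, hgeo_val]
      _ ≤ ∑' k : ℕ, (ν (Ioc (l ^ k * R) (l ^ (k + 1) * R))).toReal :=
          Summable.tsum_le_tsum hdown (hgeo_sum.mul_left _) hsummm
  -- numerics
  have hGval : (1 - l⁻¹)⁻¹ = (1 + η) / η := by
    have h1 : 1 - l⁻¹ = η / (1 + η) := by
      rw [hldef]
      field_simp
      ring
    rw [h1, inv_div]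
  have hτ0 : 0 ≤ (ν (Ioi R)).toReal := ENNReal.toReal_nonneg
  have hupper : R * (ν (Ioi R)).toReal ≤ c + ε / 2 := by
    have h1 : R * (ν (Ioi R)).toReal ≤ R * (D / R * (1 - l⁻¹)⁻¹) :=
      mul_le_mul_of_nonneg_left hub2 hR0.le
    have h2 : R * (D / R * (1 - l⁻¹)⁻¹) = D * ((1 + η) / η) := by
      rw [hGval]
      field_simp
    have e1 : D ≤ c * η + ε₁ * (2 * c + 5) := by
      rw [hDdef, hldef]
      nlinarith [mul_nonneg (mul_nonneg hc hε₁0.le) (by linarith : (0:ℝ) ≤ 1 - η),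
        mul_nonneg hε₁0.le (by linarith : (0:ℝ) ≤ 1 - ε₁),
        mul_nonneg hε₁0.le (by linarith : (0:ℝ) ≤ 1 - η),
        mul_nonneg (mul_nonneg hε₁0.le hε₁0.le) (by linarith : (0:ℝ) ≤ 1 - η)]
    have e2 : c * η ≤ ε / 4 := by nlinarith [mul_nonneg hc hη0.le]
    have e3 : c * η ^ 2 ≤ ε / 4 * η := by nlinarith [mul_le_mul_of_nonneg_right e2 hη0.le]
    have e4 : ε₁ * (2 * c + 5) * (1 + η) ≤ ε * η / 4 := by
      nlinarith [mul_nonneg (mul_nonneg hε₁0.le (by linarith : (0:ℝ) ≤ 2 * c + 5))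
        (by linarith : (0:ℝ) ≤ 1 - η), mul_nonneg (mul_nonneg hc hε₁0.le) hη0.le,
        mul_nonneg hc hε₁0.le, mul_nonneg hε₁0.le hη0.le]
    have e5 := mul_le_mul_of_nonneg_right e1 (by linarith : (0:ℝ) ≤ 1 + η)
    have h3 : D * ((1 + η) / η) ≤ c + ε / 2 := by
      rw [div_eq_mul_inv, ← mul_assoc, mul_inv_le_iff₀ hη0]
      nlinarith [e5, e3, e4]
    linarith [h1, h2 ▸ h1]
  have hlower : c - ε / 2 ≤ R * (ν (Ioi R)).toReal := by
    have h1 : R * (E / (l ^ 2 * R) * (1 - l⁻¹)⁻¹) ≤ R * (ν (Ioi R)).toReal :=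
      mul_le_mul_of_nonneg_left hlb2 hR0.le
    have h2 : R * (E / (l ^ 2 * R) * (1 - l⁻¹)⁻¹) = E / ((1 + η) * η) := by
      rw [hGval, hldef]
      field_simp
    have e2 : c * η ≤ ε / 4 := by nlinarith [mul_nonneg hc hη0.le]
    have e3 : c * η ^ 2 ≤ ε / 4 * η := by nlinarith [mul_le_mul_of_nonneg_right e2 hη0.le]
    have f1 : c * η - ε₁ * (c + 4) ≤ E := by
      rw [hEdef, hldef]
      nlinarith [mul_nonneg hε₁0.le (by linarith : (0:ℝ) ≤ 1 - η),
        mul_nonneg hε₁0.le (by linarith : (0:ℝ) ≤ 1 - ε₁)]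
    have f2 : ε₁ * (c + 4) ≤ ε * η / 4 := by
      nlinarith [mul_nonneg hc hε₁0.le, mul_nonneg hε₁0.le hη0.le,
        mul_nonneg hε.le hη0.le]
    have h3 : c - ε / 2 ≤ E / ((1 + η) * η) := by
      rw [le_div_iff₀ (by positivity)]
      nlinarith [f1, e3, f2, mul_nonneg (mul_nonneg hε.le hη0.le) hη0.le]
    linarith [h2 ▸ h1]
  rw [Real.dist_eq, abs_sub_lt_iff]
  constructor <;> linarith

set_option maxHeartbeats 1000000 in
/-- If `u ∈ L²(ℝ^d)` and `J ≥ 0` satisfy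
`lim_{R→∞} (2π²/R) ∫_{B_R} |ξ|² |û(ξ)|² dξ = J`, then
`lim_{R→∞} 2π² R ∫_{|ξ|>R} |û(ξ)|² dξ = J`. -/
theorem fourier_tail_asymptotics (d : ℕ) (u : EuclideanSpace ℝ (Fin d) → ℝ)
    (hu : MemLp u 2 volume) (J : ℝ) (hJ : 0 ≤ J)
    (h : Tendsto (fun R : ℝ => (2 * Real.pi ^ 2 / R) *
        ∫ ξ in ball (0 : EuclideanSpace ℝ (Fin d)) R,
          ‖ξ‖ ^ 2 * ‖𝓕 (fun x => (u x : ℂ)) ξ‖ ^ 2) atTop (𝓝 J)) :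
    Tendsto (fun R : ℝ => 2 * Real.pi ^ 2 * R *
        ∫ ξ in {ξ : EuclideanSpace ℝ (Fin d) | R < ‖ξ‖},
          ‖𝓕 (fun x => (u x : ℂ)) ξ‖ ^ 2) atTop (𝓝 J) := by
  classical
  set v : EuclideanSpace ℝ (Fin d) → ℂ := fun x => (u x : ℂ) with hvdef
  by_cases hint : Integrable v volume
  · -- integrable case
    have hgc : Continuous (𝓕 v) :=
      VectorFourier.fourierIntegral_continuous Real.continuous_fourierChar
        (by exact continuous_inner) hint
    have hgcont : Continuous (fun ξ : EuclideanSpace ℝ (Fin d) => ‖𝓕 v ξ‖ ^ 2) :=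
      (hgc.norm).pow 2
    have hgm : Measurable (fun ξ : EuclideanSpace ℝ (Fin d) => ‖𝓕 v ξ‖ ^ 2) :=
      hgcont.measurable
    set wd : Measure (EuclideanSpace ℝ (Fin d)) :=
      volume.withDensity (fun ξ => ENNReal.ofReal (‖𝓕 v ξ‖ ^ 2)) with hwddef
    set ν : Measure ℝ := wd.map (fun ξ => ‖ξ‖) with hνdef
    have hν_apply : ∀ R : ℝ, ν (Ioi R) =
        ∫⁻ ξ in {ξ : EuclideanSpace ℝ (Fin d) | R < ‖ξ‖}, ENNReal.ofReal (‖𝓕 v ξ‖ ^ 2) := by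
      intro R
      rw [hνdef, Measure.map_apply measurable_norm measurableSet_Ioi, hwddef,
        withDensity_apply _ (measurable_norm measurableSet_Ioi)]
      rfl
    have hB : ∀ R : ℝ, (∫ ξ in {ξ : EuclideanSpace ℝ (Fin d) | R < ‖ξ‖}, ‖𝓕 v ξ‖ ^ 2)
        = (ν (Ioi R)).toReal := by
      intro R
      rw [integral_eq_lintegral_of_nonneg_ae (Eventually.of_forall fun ξ => by positivity)
        hgcont.aestronglyMeasurable.restrict, hν_apply R]
    have hΦeq : ∀ R : ℝ, (∫⁻ r in Iio R, ENNReal.ofReal (r ^ 2) ∂ν) =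
        ∫⁻ ξ in ball (0 : EuclideanSpace ℝ (Fin d)) R,
          ENNReal.ofReal (‖ξ‖ ^ 2 * ‖𝓕 v ξ‖ ^ 2) := by
      intro R
      rw [hνdef, setLIntegral_map (f := fun r : ℝ => ENNReal.ofReal (r ^ 2))
        (g := fun ξ : EuclideanSpace ℝ (Fin d) => ‖ξ‖) measurableSet_Iio
        (by fun_prop) (by fun_prop)]
      have hpre : (fun ξ : EuclideanSpace ℝ (Fin d) => ‖ξ‖) ⁻¹' Iio R = ball 0 R := by
        ext ξ
        simp [mem_ball_zero_iff]
      rw [hpre, hwddef, setLIntegral_withDensity_eq_setLIntegral_mul volume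
        hgm.ennreal_ofReal ((measurable_norm.pow_const 2).ennreal_ofReal) measurableSet_ball]
      refine setLIntegral_congr_fun measurableSet_ball (fun ξ _ => ?_)
      simp only [Pi.mul_apply]
      rw [← ENNReal.ofReal_mul (by positivity), mul_comm]
    have hFeq : ∀ R : ℝ, (∫ ξ in ball (0 : EuclideanSpace ℝ (Fin d)) R,
        ‖ξ‖ ^ 2 * ‖𝓕 v ξ‖ ^ 2) = (∫⁻ r in Iio R, ENNReal.ofReal (r ^ 2) ∂ν).toReal := by
      intro R
      rw [integral_eq_lintegral_of_nonneg_ae (Eventually.of_forall fun ξ => by positivity)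
        (show Continuous (fun ξ : EuclideanSpace ℝ (Fin d) => ‖ξ‖ ^ 2 * ‖𝓕 v ξ‖ ^ 2) from
          (continuous_norm.pow 2).mul hgcont).aestronglyMeasurable.restrict, hΦeq R]
    have hfin : ∀ R : ℝ, (∫⁻ r in Iio R, ENNReal.ofReal (r ^ 2) ∂ν) ≠ ⊤ := by
      intro R
      rw [hΦeq R]
      set M : ℝ := ∫ x, ‖v x‖ with hMdef
      have hM0 : 0 ≤ M := integral_nonneg fun x => norm_nonneg _
      have hMb : ∀ ξ, ‖𝓕 v ξ‖ ≤ M := fun ξ =>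
        VectorFourier.norm_fourierIntegral_le_integral_norm _ _ _ _ _
      have hle : (∫⁻ ξ in ball (0 : EuclideanSpace ℝ (Fin d)) R,
          ENNReal.ofReal (‖ξ‖ ^ 2 * ‖𝓕 v ξ‖ ^ 2)) ≤
          ∫⁻ _ in ball (0 : EuclideanSpace ℝ (Fin d)) R, ENNReal.ofReal (R ^ 2 * M ^ 2) := by
        refine setLIntegral_mono measurable_const fun ξ hξ => ?_
        have h1 : ‖ξ‖ < R := mem_ball_zero_iff.1 hξ
        refine ENNReal.ofReal_le_ofReal ?_
        have h2 : ‖ξ‖ ^ 2 ≤ R ^ 2 := by nlinarith [norm_nonneg ξ]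
        have h3 : ‖𝓕 v ξ‖ ^ 2 ≤ M ^ 2 := by nlinarith [norm_nonneg (𝓕 v ξ), hMb ξ]
        have := mul_le_mul h2 h3 (by positivity) (by nlinarith [norm_nonneg ξ, h1])
        linarith
      refine ne_top_of_le_ne_top ?_ hle
      rw [setLIntegral_const]
      exact ENNReal.mul_ne_top ENNReal.ofReal_ne_top (measure_ball_lt_top).ne
    have hpi : (0:ℝ) < 2 * Real.pi ^ 2 := by positivity
    set c : ℝ := J / (2 * Real.pi ^ 2) with hcdef
    have hφlim : Tendsto (fun R : ℝ =>
        (∫⁻ r in Iio R, ENNReal.ofReal (r ^ 2) ∂ν).toReal / R) atTop (𝓝 c) := by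
      have h2 := (h.const_mul (1 / (2 * Real.pi ^ 2)))
      have h3 : (1 / (2 * Real.pi ^ 2)) * J = c := by
        rw [hcdef]; field_simp
      rw [h3] at h2
      refine h2.congr' ?_
      filter_upwards [eventually_gt_atTop (0:ℝ)] with R hR0
      rw [hFeq R]
      field_simp
    have htail := tail_lemma ν c (div_nonneg hJ hpi.le) hfin hφlim
    have hfinal := htail.const_mul (2 * Real.pi ^ 2)
    have hc2 : (2 * Real.pi ^ 2) * c = J := by
      rw [hcdef]
      field_simp
    rw [hc2] at hfinal
    refine hfinal.congr fun R => ?_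
    rw [hB R]
    ring
  · -- non-integrable case : the Fourier integral is identically zero
    have hzero : ∀ ξ, 𝓕 v ξ = 0 := by
      intro ξ
      rw [Real.fourier_eq]
      refine integral_undef fun hI => hint ?_
      exact (Real.fourierIntegral_convergent_iff ξ).1 hI
    have hJ0 : J = 0 := by
      have h0 : Tendsto (fun _ : ℝ => (0:ℝ)) atTop (𝓝 J) := by
        refine h.congr fun R => ?_
        simp [hzero]
      exact tendsto_nhds_unique h0 tendsto_const_nhds
    rw [hJ0]
    refine tendsto_const_nhds.congr fun R => ?_
    simp [hzero]
end
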